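/- arXiv:2601.14195 — 9 statements merged into one kernel-verified Lean document; each statement's English description precedes it below -/
import Mathlib

section
/- There exists a Stable Roommates instance (a finite set of agents each with a strict preference order over a subset of the other agents, with symmetric acceptability) and two matchings M and M' such that M minimizes the number of blocking agents among all matchings but does not minimize the number of blocking pairs, while M' admits strictly fewer blocking pairs than M. -/
/-- A Stable Roommates (SRI) instance: a set of agents, symmetric irreflexive
acceptability, and for each agent a strict (transitive, total, irreflexive)
preference order over its acceptable partners. -/
structure SRI (A : Type) where
  acc : A → A → Prop
  acc_symm : ∀ a b, acc a b → acc b a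
  acc_irrefl : ∀ a, ¬ acc a a
  /-- `pref a b c` : agent `a` strictly prefers `b` to `c`. -/
  pref : A → A → A → Prop
  pref_acc : ∀ a b c, pref a b c → acc a b ∧ acc a c
  pref_trans : ∀ a b c d, pref a b c → pref a c d → pref a b d
  pref_irrefl : ∀ a b, ¬ pref a b b
  pref_total : ∀ a b c, acc a b → acc a c → b ≠ c → pref a b c ∨ pref a c b

/-- A matching, encoded as an involution: `m a = a` means `a` is unmatched. -/
structure Matching {A : Type} (I : SRI A) where
  m : A → A
  invol : ∀ a, m (m a) = a
  acc_matched : ∀ a, m a ≠ a → I.acc a (m a)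

/-- `{a, b}` is a blocking pair: mutually acceptable, and each is unmatched or
prefers the other to its current partner. -/
def blocks {A : Type} (I : SRI A) (M : Matching I) (a b : A) : Prop :=
  I.acc a b ∧ (M.m a = a ∨ I.pref a b (M.m a)) ∧ (M.m b = b ∨ I.pref b a (M.m b))

/-- Number of blocking pairs containing agent `a`. -/
noncomputable def bpa {A : Type} (I : SRI A) (M : Matching I) (a : A) : ℕ :=
  {b | blocks I M a b}.ncard

/-- Maximum over agents of the number of blocking pairs containing that agent. -/
noncomputable def maxBP {A : Type} (I : SRI A) (M : Matching I) : ℕ :=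
  sSup (Set.range fun a => bpa I M a)

/-- Total number of (unordered) blocking pairs. -/
noncomputable def totalBP {A : Type} (I : SRI A) (M : Matching I) : ℕ :=
  {p : Sym2 A | ∃ a b, p = s(a, b) ∧ blocks I M a b}.ncard

/-- Number of agents contained in at least one blocking pair. -/
noncomputable def blockAgents {A : Type} (I : SRI A) (M : Matching I) : ℕ :=
  {a | ∃ b, blocks I M a b}.ncard

/-- Number of matched agents (twice the number of pairs). -/
noncomputable def msize {A : Type} (I : SRI A) (M : Matching I) : ℕ :=
  {a | M.m a ≠ a}.ncard

/-- `M` is a maximum-cardinality matching. -/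
def MaxCard {A : Type} (I : SRI A) (M : Matching I) : Prop :=
  ∀ M' : Matching I, msize I M' ≤ msize I M

/-- The instance is bipartite with respect to the two sides given by `side`. -/
def Bip {A : Type} (I : SRI A) (side : A → Bool) : Prop :=
  ∀ a b, I.acc a b → side a ≠ side b

/-- `M` is stable: no blocking pair. -/
def Stable {A : Type} (I : SRI A) (M : Matching I) : Prop :=
  ∀ a b, ¬ blocks I M a b

-- my defs
def accB (a b : Fin 6) : Bool :=
  ((a.val, b.val) ∈ [(0,1),(0,2),(1,2),(3,4),(3,5),(4,5),(0,3)]) ||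
  ((b.val, a.val) ∈ [(0,1),(0,2),(1,2),(3,4),(3,5),(4,5),(0,3)])

def rk (a b : Fin 6) : Nat :=
  match a.val, b.val with
  | 0,1 => 0 | 0,2 => 1 | 0,3 => 2
  | 1,2 => 0 | 1,0 => 1
  | 2,0 => 0 | 2,1 => 1
  | 3,4 => 0 | 3,5 => 1 | 3,0 => 2
  | 4,5 => 0 | 4,3 => 1
  | 5,3 => 0 | 5,4 => 1
  | _,_ => 9

def prefB (a b c : Fin 6) : Bool := accB a b && accB a c && decide (rk a b < rk a c)

def myI : SRI (Fin 6) where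
  acc a b := accB a b = true
  acc_symm := by decide
  acc_irrefl := by decide
  pref a b c := prefB a b c = true
  pref_acc := by decide
  pref_trans := by decide
  pref_irrefl := by decide
  pref_total := by decide

instance (a b : Fin 6) : Decidable (myI.acc a b) := inferInstanceAs (Decidable (accB a b = true))
instance (a b c : Fin 6) : Decidable (myI.pref a b c) := inferInstanceAs (Decidable (prefB a b c = true))
instance (M : Matching myI) (a b : Fin 6) : Decidable (blocks myI M a b) := by
  unfold blocks; infer_instance

def mM : Matching myI where
  m := ![0,2,1,3,5,4]
  invol := by decide
  acc_matched := by decide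

def mM' : Matching myI where
  m := ![1,0,2,4,3,5]
  invol := by decide
  acc_matched := by decide

lemma bA_M : blockAgents myI mM = 4 := by
  rw [blockAgents, Set.ncard_eq_toFinset_card', Set.toFinset_setOf]
  decide

lemma tBP_M : totalBP myI mM = 3 := by
  rw [totalBP, Set.ncard_eq_toFinset_card', Set.toFinset_setOf]
  decide

lemma tBP_M' : totalBP myI mM' = 2 := by
  rw [totalBP, Set.ncard_eq_toFinset_card', Set.toFinset_setOf]
  decide

lemma macc (M : Matching myI) (a : Fin 6) : M.m a = a ∨ myI.acc a (M.m a) := by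
  rcases eq_or_ne (M.m a) a with h|h
  · exact Or.inl h
  · exact Or.inr (M.acc_matched a h)

lemma mval (M : Matching myI) (a : Fin 6) :
    M.m a = a ∨ accB a (M.m a) = true := macc M a

lemma mval1 (M : Matching myI) : M.m 1 = 1 ∨ M.m 1 = 0 ∨ M.m 1 = 2 := by
  obtain ⟨v, hv⟩ : ∃ v, M.m 1 = v := ⟨_, rfl⟩
  have h := mval M 1
  rw [hv] at h ⊢
  fin_cases v <;> revert h <;> decide

lemma mval0 (M : Matching myI) : M.m 0 = 0 ∨ M.m 0 = 1 ∨ M.m 0 = 2 ∨ M.m 0 = 3 := by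
  obtain ⟨v, hv⟩ : ∃ v, M.m 0 = v := ⟨_, rfl⟩
  have h := mval M 0
  rw [hv] at h ⊢
  fin_cases v <;> revert h <;> decide

lemma mval2 (M : Matching myI) : M.m 2 = 2 ∨ M.m 2 = 0 ∨ M.m 2 = 1 := by
  obtain ⟨v, hv⟩ : ∃ v, M.m 2 = v := ⟨_, rfl⟩
  have h := mval M 2
  rw [hv] at h ⊢
  fin_cases v <;> revert h <;> decide

lemma mval4 (M : Matching myI) : M.m 4 = 4 ∨ M.m 4 = 3 ∨ M.m 4 = 5 := by
  obtain ⟨v, hv⟩ : ∃ v, M.m 4 = v := ⟨_, rfl⟩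
  have h := mval M 4
  rw [hv] at h ⊢
  fin_cases v <;> revert h <;> decide

lemma mval3 (M : Matching myI) : M.m 3 = 3 ∨ M.m 3 = 4 ∨ M.m 3 = 5 ∨ M.m 3 = 0 := by
  obtain ⟨v, hv⟩ : ∃ v, M.m 3 = v := ⟨_, rfl⟩
  have h := mval M 3
  rw [hv] at h ⊢
  fin_cases v <;> revert h <;> decide

lemma mval5 (M : Matching myI) : M.m 5 = 5 ∨ M.m 5 = 3 ∨ M.m 5 = 4 := by
  obtain ⟨v, hv⟩ : ∃ v, M.m 5 = v := ⟨_, rfl⟩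
  have h := mval M 5
  rw [hv] at h ⊢
  fin_cases v <;> revert h <;> decide

-- blocks with both partners' matches known is decidable: helper to build blocks proofs
lemma blocks_of (M : Matching myI) (a b x y : Fin 6)
    (hx : M.m a = x) (hy : M.m b = y)
    (h : accB a b = true ∧ (x = a ∨ prefB a b x = true) ∧ (y = b ∨ prefB b a y = true)) :
    blocks myI M a b := by
  refine ⟨h.1, ?_, ?_⟩
  · rcases h.2.1 with h'|h'
    · exact Or.inl (hx.trans h')
    · exact Or.inr (by rw [hx]; exact h')
  · rcases h.2.2 with h'|h'
    · exact Or.inl (hy.trans h')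
    · exact Or.inr (by rw [hy]; exact h')

lemma cyc1 (M : Matching myI) :
    ∃ a b : Fin 6, a.val < 3 ∧ b.val < 3 ∧ a ≠ b ∧
      (∃ c, blocks myI M a c) ∧ (∃ d, blocks myI M b d) := by
  rcases mval1 M with h1 | h1 | h1
  · -- 1 unmatched
    rcases mval0 M with h0 | h0 | h0 | h0
    · -- 0 unmatched; m 2 ∈ {2,1?no,0?no}: if m2=0 then m0=2 contra; if m2=1 then m1=2 contra
      have h2 : M.m 2 = 2 := by
        rcases mval2 M with h|h|h
        · exact h
        · have := M.invol 2; rw [h, h0] at this; exact absurd this (by decide)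
        · have := M.invol 2; rw [h, h1] at this; exact absurd this (by decide)
      exact ⟨1, 2, by decide, by decide, by decide,
        ⟨2, blocks_of M 1 2 1 2 h1 h2 (by decide)⟩,
        ⟨1, blocks_of M 2 1 2 1 h2 h1 (by decide)⟩⟩
    · -- m 0 = 1 contradicts m 1 = 1
      have := M.invol 0; rw [h0, h1] at this; exact absurd this (by decide)
    · -- m 0 = 2, m 2 = 0, 1 unmatched: pair {0,1}
      exact ⟨0, 1, by decide, by decide, by decide,
        ⟨1, blocks_of M 0 1 2 1 h0 h1 (by decide)⟩,
        ⟨0, blocks_of M 1 0 1 2 h1 h0 (by decide)⟩⟩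
    · -- m 0 = 3: m 2 = 2, pair {1,2}
      have h2 : M.m 2 = 2 := by
        rcases mval2 M with h|h|h
        · exact h
        · have := M.invol 2; rw [h, h0] at this; exact absurd this (by decide)
        · have := M.invol 2; rw [h, h1] at this; exact absurd this (by decide)
      exact ⟨1, 2, by decide, by decide, by decide,
        ⟨2, blocks_of M 1 2 1 2 h1 h2 (by decide)⟩,
        ⟨1, blocks_of M 2 1 2 1 h2 h1 (by decide)⟩⟩
  · -- m 1 = 0, so m 0 = 1, m 2 = 2; pair {1,2}
    have h0 : M.m 0 = 1 := by have := M.invol 1; rw [h1] at this; exact this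
    have h2 : M.m 2 = 2 := by
      rcases mval2 M with h|h|h
      · exact h
      · have := M.invol 2; rw [h, h0] at this; exact absurd this (by decide)
      · have := M.invol 2; rw [h, h1] at this; exact absurd this (by decide)
    exact ⟨1, 2, by decide, by decide, by decide,
      ⟨2, blocks_of M 1 2 0 2 h1 h2 (by decide)⟩,
      ⟨1, blocks_of M 2 1 2 0 h2 h1 (by decide)⟩⟩
  · -- m 1 = 2, so m 2 = 1; pair {0,2}, 0 unmatched or matched to 3
    have h2 : M.m 2 = 1 := by have := M.invol 1; rw [h1] at this; exact this
    rcases mval0 M with h0 | h0 | h0 | h0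
    · exact ⟨0, 2, by decide, by decide, by decide,
        ⟨2, blocks_of M 0 2 0 1 h0 h2 (by decide)⟩,
        ⟨0, blocks_of M 2 0 1 0 h2 h0 (by decide)⟩⟩
    · have := M.invol 0; rw [h0, h1] at this; exact absurd this (by decide)
    · have := M.invol 0; rw [h0, h2] at this; exact absurd this (by decide)
    · exact ⟨0, 2, by decide, by decide, by decide,
        ⟨2, blocks_of M 0 2 3 1 h0 h2 (by decide)⟩,
        ⟨0, blocks_of M 2 0 1 3 h2 h0 (by decide)⟩⟩

lemma cyc2 (M : Matching myI) :
    ∃ a b : Fin 6, 2 < a.val ∧ 2 < b.val ∧ a ≠ b ∧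
      (∃ c, blocks myI M a c) ∧ (∃ d, blocks myI M b d) := by
  rcases mval4 M with h1 | h1 | h1
  · rcases mval3 M with h0 | h0 | h0 | h0
    · have h2 : M.m 5 = 5 := by
        rcases mval5 M with h|h|h
        · exact h
        · have := M.invol 5; rw [h, h0] at this; exact absurd this (by decide)
        · have := M.invol 5; rw [h, h1] at this; exact absurd this (by decide)
      exact ⟨4, 5, by decide, by decide, by decide,
        ⟨5, blocks_of M 4 5 4 5 h1 h2 (by decide)⟩,
        ⟨4, blocks_of M 5 4 5 4 h2 h1 (by decide)⟩⟩
    · have := M.invol 3; rw [h0, h1] at this; exact absurd this (by decide)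
    · exact ⟨3, 4, by decide, by decide, by decide,
        ⟨4, blocks_of M 3 4 5 4 h0 h1 (by decide)⟩,
        ⟨3, blocks_of M 4 3 4 5 h1 h0 (by decide)⟩⟩
    · have h2 : M.m 5 = 5 := by
        rcases mval5 M with h|h|h
        · exact h
        · have := M.invol 5; rw [h, h0] at this; exact absurd this (by decide)
        · have := M.invol 5; rw [h, h1] at this; exact absurd this (by decide)
      exact ⟨4, 5, by decide, by decide, by decide,
        ⟨5, blocks_of M 4 5 4 5 h1 h2 (by decide)⟩,
        ⟨4, blocks_of M 5 4 5 4 h2 h1 (by decide)⟩⟩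
  · -- m 4 = 3, so m 3 = 4, m 5 = 5; pair {4,5}
    have h0 : M.m 3 = 4 := by have := M.invol 4; rw [h1] at this; exact this
    have h2 : M.m 5 = 5 := by
      rcases mval5 M with h|h|h
      · exact h
      · have := M.invol 5; rw [h, h0] at this; exact absurd this (by decide)
      · have := M.invol 5; rw [h, h1] at this; exact absurd this (by decide)
    exact ⟨4, 5, by decide, by decide, by decide,
      ⟨5, blocks_of M 4 5 3 5 h1 h2 (by decide)⟩,
      ⟨4, blocks_of M 5 4 5 3 h2 h1 (by decide)⟩⟩
  · -- m 4 = 5, m 5 = 4; pair {3,5}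
    have h2 : M.m 5 = 4 := by have := M.invol 4; rw [h1] at this; exact this
    rcases mval3 M with h0 | h0 | h0 | h0
    · exact ⟨3, 5, by decide, by decide, by decide,
        ⟨5, blocks_of M 3 5 3 4 h0 h2 (by decide)⟩,
        ⟨3, blocks_of M 5 3 4 3 h2 h0 (by decide)⟩⟩
    · have := M.invol 3; rw [h0, h1] at this; exact absurd this (by decide)
    · have := M.invol 3; rw [h0, h2] at this; exact absurd this (by decide)
    · exact ⟨3, 5, by decide, by decide, by decide,
        ⟨5, blocks_of M 3 5 0 4 h0 h2 (by decide)⟩,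
        ⟨3, blocks_of M 5 3 4 0 h2 h0 (by decide)⟩⟩

lemma lb (M : Matching myI) : 4 ≤ blockAgents myI M := by
  obtain ⟨a, b, ha, hb, hab, hac, hbc⟩ := cyc1 M
  obtain ⟨c, d, hc, hd, hcd, hcc, hdc⟩ := cyc2 M
  have hac' : a ≠ c := fun h => by rw [h] at ha; omega
  have had : a ≠ d := fun h => by rw [h] at ha; omega
  have hbc' : b ≠ c := fun h => by rw [h] at hb; omega
  have hbd : b ≠ d := fun h => by rw [h] at hb; omega
  have hsub : ({a, b, c, d} : Set (Fin 6)) ⊆ {x | ∃ y, blocks myI M x y} := by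
    intro x hx
    rcases hx with h|h|h|h <;> subst h
    · exact hac
    · exact hbc
    · exact hcc
    · exact hdc
  have hcard : ({a, b, c, d} : Set (Fin 6)).ncard = 4 := by
    rw [Set.ncard_insert_of_notMem (by simp [hab, hac', had]) (Set.toFinite _),
        Set.ncard_insert_of_notMem (by simp [hbc', hbd]) (Set.toFinite _),
        Set.ncard_insert_of_notMem (by simp [hcd]) (Set.toFinite _),
        Set.ncard_singleton]
  calc 4 = ({a, b, c, d} : Set (Fin 6)).ncard := hcard.symm
    _ ≤ _ := Set.ncard_le_ncard hsub (Set.toFinite _)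

/-- There is an SRI instance and matchings M, M' such that M minimizes the number
of blocking agents among all matchings, but does not minimize the number of
blocking pairs; indeed M' admits strictly fewer blocking pairs than M. -/
theorem stmt0 :
    ∃ (A : Type) (_ : Fintype A) (I : SRI A) (M M' : Matching I),
      (∀ M'' : Matching I, blockAgents I M ≤ blockAgents I M'') ∧
      ¬ (∀ M'' : Matching I, totalBP I M ≤ totalBP I M'') ∧
      totalBP I M' < totalBP I M := by
  refine ⟨Fin 6, inferInstance, myI, mM, mM', ?_, ?_, ?_⟩
  · intro M''
    rw [bA_M]
    exact lb M''
  · intro h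
    have := h mM'
    rw [tBP_M, tBP_M'] at this
    omega
  · rw [tBP_M, tBP_M']
    omega
end

section
/- There exists a Stable Roommates instance and a matching M such that M minimizes over all matchings the maximum number of blocking pairs that any single agent is contained in, yet M does not minimize the total number of blocking pairs. -/
/-! ### Auxiliary construction -/

/-- Rank matrix: `rX a b = 9` means `b` unacceptable to `a`; otherwise lower is better.
Agents 0,1,2 form the classic preference triangle; agents 3,4 accept only each other. -/
abbrev rX : Fin 5 → Fin 5 → ℕ :=
  ![![9,0,1,9,9], ![1,9,0,9,9], ![0,1,9,9,9], ![9,9,9,9,0], ![9,9,9,0,9]]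

abbrev accX : Fin 5 → Fin 5 → Prop := fun a b => rX a b ≠ 9

abbrev prefX : Fin 5 → Fin 5 → Fin 5 → Prop :=
  fun a b c => accX a b ∧ accX a c ∧ rX a b < rX a c

def IX : SRI (Fin 5) where
  acc := accX
  acc_symm := by decide
  acc_irrefl := by decide
  pref := prefX
  pref_acc := by decide
  pref_trans := by decide
  pref_irrefl := by decide
  pref_total := by decide

instance (M : Matching IX) (a b : Fin 5) : Decidable (blocks IX M a b) := by
  unfold blocks
  show Decidable (accX a b ∧ (M.m a = a ∨ prefX a b (M.m a)) ∧
      (M.m b = b ∨ prefX b a (M.m b)))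
  infer_instance

/-- The matching {0,1}, with 2,3,4 unmatched. -/
def MX : Matching IX where
  m := ![1,0,2,3,4]
  invol := by decide
  acc_matched := fun a h =>
    (by decide : ∀ a : Fin 5, ![1,0,2,3,4] a ≠ a → accX a (![1,0,2,3,4] a)) a h

/-- The matching {0,1},{3,4}. -/
def MX' : Matching IX where
  m := ![1,0,2,4,3]
  invol := by decide
  acc_matched := fun a h =>
    (by decide : ∀ a : Fin 5, ![1,0,2,4,3] a ≠ a → accX a (![1,0,2,4,3] a)) a h

lemma exists_block (M' : Matching IX) : ∃ a b, blocks IX M' a b := by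
  have key0 : ∀ b : Fin 5, accX 0 b → b = 1 ∨ b = 2 := by decide
  have key1 : ∀ b : Fin 5, accX 1 b → b = 0 ∨ b = 2 := by decide
  have h0 : M'.m 0 = 0 ∨ M'.m 0 = 1 ∨ M'.m 0 = 2 := by
    by_cases h : M'.m 0 = 0
    · exact Or.inl h
    · rcases key0 _ (M'.acc_matched 0 h) with h' | h'
      · exact Or.inr (Or.inl h')
      · exact Or.inr (Or.inr h')
  rcases h0 with h00 | h01 | h02
  · -- 0 unmatched
    have h1 : M'.m 1 = 1 ∨ M'.m 1 = 2 := by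
      by_cases h : M'.m 1 = 1
      · exact Or.inl h
      · rcases key1 _ (M'.acc_matched 1 h) with h' | h'
        · exfalso
          have := M'.invol 1
          rw [h'] at this
          rw [h00] at this
          exact absurd this (by decide)
        · exact Or.inr h'
    rcases h1 with h11 | h12
    · -- 0,1 unmatched : {0,1} blocks
      exact ⟨0, 1, (by decide : accX 0 1), Or.inl h00, Or.inl h11⟩
    · -- 1 matched to 2 : {2,0} blocks
      have h21 : M'.m 2 = 1 := by have := M'.invol 1; rwa [h12] at this
      refine ⟨2, 0, (by decide : accX 2 0), Or.inr ?_, Or.inl h00⟩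
      rw [h21]; exact (by decide : prefX 2 0 1)
  · -- 0 matched to 1 : 2 is unmatched, {1,2} blocks
    have h10 : M'.m 1 = 0 := by have := M'.invol 0; rwa [h01] at this
    have h22 : M'.m 2 = 2 := by
      by_cases h : M'.m 2 = 2
      · exact h
      · exfalso
        have key2 : ∀ b : Fin 5, accX 2 b → b = 0 ∨ b = 1 := by decide
        rcases key2 _ (M'.acc_matched 2 h) with h' | h'
        · have := M'.invol 2; rw [h'] at this
          rw [h01] at this; exact absurd this (by decide)
        · have := M'.invol 2; rw [h'] at this
          rw [h10] at this; exact absurd this (by decide)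
    refine ⟨1, 2, (by decide : accX 1 2), Or.inr ?_, Or.inl h22⟩
    rw [h10]; exact (by decide : prefX 1 2 0)
  · -- 0 matched to 2 : 1 is unmatched, {0,1} blocks
    have h20 : M'.m 2 = 0 := by have := M'.invol 0; rwa [h02] at this
    have h11 : M'.m 1 = 1 := by
      by_cases h : M'.m 1 = 1
      · exact h
      · exfalso
        rcases key1 _ (M'.acc_matched 1 h) with h' | h'
        · have := M'.invol 1; rw [h'] at this
          rw [h02] at this; exact absurd this (by decide)
        · have := M'.invol 1; rw [h'] at this
          rw [h20] at this; exact absurd this (by decide)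
    refine ⟨0, 1, (by decide : accX 0 1), Or.inr ?_, Or.inl h11⟩
    rw [h02]; exact (by decide : prefX 0 1 2)

lemma one_le_maxBP (M' : Matching IX) : 1 ≤ maxBP IX M' := by
  obtain ⟨a, b, hab⟩ := exists_block M'
  have h1 : 1 ≤ bpa IX M' a := by
    have : 0 < ({b' | blocks IX M' a b'} : Set (Fin 5)).ncard :=
      (Set.ncard_pos (Set.toFinite _)).mpr ⟨b, hab⟩
    exact this
  calc 1 ≤ bpa IX M' a := h1
    _ ≤ maxBP IX M' :=
      le_csSup ((Set.finite_range _).bddAbove) (Set.mem_range_self a)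

lemma maxBP_MX_le : maxBP IX MX ≤ 1 := by
  have key : ∀ a b : Fin 5, blocks IX MX a b → b = ![1,2,1,4,3] a := by decide
  have hb : ∀ a : Fin 5, bpa IX MX a ≤ 1 := by
    intro a
    have hsub : {b | blocks IX MX a b} ⊆ ({![1,2,1,4,3] a} : Set (Fin 5)) :=
      fun b hb => key a b hb
    calc bpa IX MX a ≤ ({![1,2,1,4,3] a} : Set (Fin 5)).ncard :=
          Set.ncard_le_ncard hsub (Set.finite_singleton _)
      _ = 1 := Set.ncard_singleton _
  apply csSup_le ⟨bpa IX MX 0, Set.mem_range_self 0⟩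
  rintro x ⟨a, rfl⟩
  exact hb a

lemma two_le_totalBP_MX : 2 ≤ totalBP IX MX := by
  have hne : s((1 : Fin 5), (2 : Fin 5)) ≠ s((3 : Fin 5), (4 : Fin 5)) := by decide
  have hsub : ({s((1 : Fin 5), (2 : Fin 5)), s((3 : Fin 5), (4 : Fin 5))} : Set (Sym2 (Fin 5)))
      ⊆ {p : Sym2 (Fin 5) | ∃ a b, p = s(a, b) ∧ blocks IX MX a b} := by
    rintro p hp
    rcases hp with rfl | rfl
    · exact ⟨1, 2, rfl, by decide⟩
    · exact ⟨3, 4, rfl, by decide⟩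
  calc 2 = ({s((1 : Fin 5), (2 : Fin 5)), s((3 : Fin 5), (4 : Fin 5))} :
        Set (Sym2 (Fin 5))).ncard := (Set.ncard_pair hne).symm
    _ ≤ totalBP IX MX := Set.ncard_le_ncard hsub (Set.toFinite _)

lemma totalBP_MX'_le : totalBP IX MX' ≤ 1 := by
  have key : ∀ a b : Fin 5, blocks IX MX' a b →
      (a = 1 ∧ b = 2) ∨ (a = 2 ∧ b = 1) := by decide
  have hsub : {p : Sym2 (Fin 5) | ∃ a b, p = s(a, b) ∧ blocks IX MX' a b}
      ⊆ ({s((1 : Fin 5), (2 : Fin 5))} : Set (Sym2 (Fin 5))) := by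
    rintro p ⟨a, b, rfl, hb⟩
    rcases key a b hb with ⟨rfl, rfl⟩ | ⟨rfl, rfl⟩
    · rfl
    · show s((2 : Fin 5), (1 : Fin 5)) = s((1 : Fin 5), (2 : Fin 5))
      exact Sym2.eq_swap
  calc totalBP IX MX' ≤ ({s((1 : Fin 5), (2 : Fin 5))} : Set (Sym2 (Fin 5))).ncard :=
        Set.ncard_le_ncard hsub (Set.finite_singleton _)
    _ = 1 := Set.ncard_singleton _

/-- There is an SRI instance and a matching M that minimizes, over all matchings,
the maximum number of blocking pairs any single agent is in, yet M does not
minimize the total number of blocking pairs. -/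
theorem stmt1 :
    ∃ (A : Type) (_ : Fintype A) (I : SRI A) (M : Matching I),
      (∀ M' : Matching I, maxBP I M ≤ maxBP I M') ∧
      ¬ (∀ M' : Matching I, totalBP I M ≤ totalBP I M') := by
  refine ⟨Fin 5, inferInstance, IX, MX, ?_, ?_⟩
  · intro M'
    exact le_trans maxBP_MX_le (one_le_maxBP M')
  · intro h
    have h1 := h MX'
    have h2 := two_le_totalBP_MX
    have h3 := totalBP_MX'_le
    omega
end

section
/- There exists a Stable Roommates instance and matchings M, M' such that M minimizes the number of blocking agents but some agent of M is in two blocking pairs, while M' has the property that no agent is in more than one blocking pair; hence a matching minimizing the number of blocking agents need not attain the minimax number of blocking pairs per agent. -/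
set_option maxRecDepth 100000

namespace Stmt2Aux

/-- Rank matrix: `rk a b` is the position of `b` in `a`'s preference list
(9 on the diagonal, i.e. unranked). -/
def rk : Fin 5 → Fin 5 → ℕ :=
  ![![9,0,2,1,3],
    ![3,9,1,0,2],
    ![3,0,9,1,2],
    ![3,1,0,9,2],
    ![0,2,3,1,9]]

abbrev myAcc (a b : Fin 5) : Prop := a ≠ b

abbrev myPref (a b c : Fin 5) : Prop := a ≠ b ∧ a ≠ c ∧ rk a b < rk a c

def myI : SRI (Fin 5) where
  acc := myAcc
  acc_symm := by decide
  acc_irrefl := by decide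
  pref := myPref
  pref_acc := by decide
  pref_trans := by decide
  pref_irrefl := by decide
  pref_total := by decide

/-- blocks, expressed purely in terms of the matching function. -/
def fblocks (f : Fin 5 → Fin 5) (a b : Fin 5) : Prop :=
  myAcc a b ∧ (f a = a ∨ myPref a b (f a)) ∧ (f b = b ∨ myPref b a (f b))

instance : ∀ f a b, Decidable (fblocks f a b) := fun _ _ _ => by
  unfold fblocks; infer_instance

lemma blocks_eq (M : Matching myI) (a b : Fin 5) :
    blocks myI M a b ↔ fblocks M.m a b := Iff.rfl

lemma ncard_filter (p : Fin 5 → Prop) [DecidablePred p] :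
    {x | p x}.ncard = (Finset.univ.filter p).card := by
  rw [Set.ncard_eq_toFinset_card', Set.toFinset_setOf]

def theM : Matching myI where
  m := ![1,0,2,4,3]
  invol := by decide
  acc_matched := fun _ h => h.symm

def theM' : Matching myI where
  m := ![0,2,1,4,3]
  invol := by decide
  acc_matched := fun _ h => h.symm

lemma bpa_eq (M : Matching myI) (a : Fin 5) :
    bpa myI M a = (Finset.univ.filter (fun b => fblocks M.m a b)).card := by
  unfold bpa
  simp only [blocks_eq]
  exact ncard_filter _

lemma blockAgents_eq (M : Matching myI) :
    blockAgents myI M = (Finset.univ.filter (fun a => ∃ b, fblocks M.m a b)).card := by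
  unfold blockAgents
  simp only [blocks_eq]
  exact ncard_filter _

set_option maxRecDepth 100000 in
lemma key5 : ∀ v0 v1 v2 v3 v4 : Fin 5,
    (∀ a, ![v0,v1,v2,v3,v4] (![v0,v1,v2,v3,v4] a) = a) →
    3 ≤ (Finset.univ.filter (fun a => ∃ b, fblocks ![v0,v1,v2,v3,v4] a b)).card := by decide

lemma key (f : Fin 5 → Fin 5) (h : ∀ a, f (f a) = a) :
    3 ≤ (Finset.univ.filter (fun a => ∃ b, fblocks f a b)).card := by
  have hg : ![f 0, f 1, f 2, f 3, f 4] = f := by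
    funext x; fin_cases x <;> rfl
  have := key5 (f 0) (f 1) (f 2) (f 3) (f 4) (by rw [hg]; exact h)
  rwa [hg] at this

end Stmt2Aux

/-- There is an SRI instance with matchings M, M' such that M minimizes the number
of blocking agents but has an agent in two blocking pairs, while in M' no agent is
in more than one blocking pair. -/
theorem stmt2 :
    ∃ (A : Type) (_ : Fintype A) (I : SRI A) (M M' : Matching I),
      (∀ M'' : Matching I, blockAgents I M ≤ blockAgents I M'') ∧
      (∃ a, 2 ≤ bpa I M a) ∧
      (∀ a, bpa I M' a ≤ 1) :=  by
  classical
  refine ⟨Fin 5, inferInstance, Stmt2Aux.myI, Stmt2Aux.theM, Stmt2Aux.theM', ?_, ?_, ?_⟩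
  · intro M''
    rw [Stmt2Aux.blockAgents_eq, Stmt2Aux.blockAgents_eq]
    have h := Stmt2Aux.key M''.m M''.invol
    have hM : (Finset.univ.filter
        (fun a => ∃ b, Stmt2Aux.fblocks Stmt2Aux.theM.m a b)).card = 3 := by decide
    omega
  · refine ⟨1, ?_⟩
    rw [Stmt2Aux.bpa_eq]
    decide
  · intro a
    rw [Stmt2Aux.bpa_eq]
    revert a; decide
end

section
/- In the SRI instance with three agents forming a cyclic preference structure (a1: a2, a3; a2: a3, a1; a3: a1, a2), for every matching M, the maximum over agents of the number of blocking pairs containing that agent is at least 1, and the matching {{a1,a2}} achieves maximum exactly 1; hence the minimax value equals 1. -/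
/-- Preference lists of the 3-agent cyclic instance: a1: a2 a3; a2: a3 a1; a3: a1 a2. -/
def plist3 : Fin 3 → List (Fin 3) := ![[1, 2], [2, 0], [0, 1]]

/-- In the cyclic 3-agent SRI instance, every matching has some agent in at least
one blocking pair, and the matching {{a1,a2}} achieves maximum exactly 1, so the
minimax value equals 1. -/
theorem stmt4 (I : SRI (Fin 3))
    (hacc : ∀ a b, I.acc a b ↔ b ∈ plist3 a)
    (hpref : ∀ a b c, I.pref a b c ↔
      b ∈ plist3 a ∧ c ∈ plist3 a ∧ (plist3 a).idxOf b < (plist3 a).idxOf c) :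
    (∀ M : Matching I, 1 ≤ maxBP I M) ∧
    (∃ M : Matching I, M.m 0 = 1 ∧ M.m 1 = 0 ∧ M.m 2 = 2 ∧ maxBP I M = 1) := by
  classical
  have hA : ∀ x : Fin 3, x = 0 ∨ x = 1 ∨ x = 2 := by decide
  have hbp : ∀ (M : Matching I) a b, blocks I M a b → 1 ≤ maxBP I M := by
    intro M a b hab
    have h1 : 1 ≤ bpa I M a := by
      have hne : ({b' | blocks I M a b'}).Nonempty := ⟨b, hab⟩
      have := (Set.ncard_pos (s := {b' | blocks I M a b'}) (Set.toFinite _)).mpr hne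
      unfold bpa; omega
    calc 1 ≤ bpa I M a := h1
      _ ≤ maxBP I M := le_csSup (Set.finite_range _).bddAbove ⟨a, rfl⟩
  constructor
  · intro M
    have inj : ∀ x y : Fin 3, M.m x = M.m y → x = y := by
      intro x y h
      have := M.invol x
      rw [h, M.invol] at this
      omega
    rcases hA (M.m 0) with h0 | h0 | h0
    · rcases hA (M.m 1) with h1 | h1 | h1
      · exact absurd (inj 0 1 (by rw [h0, h1])) (by decide)
      · -- both 0 and 1 unmatched: {0,1} blocks
        refine hbp M 0 1 ⟨(hacc 0 1).mpr (by decide), Or.inl h0, Or.inl h1⟩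
      · -- M.m 1 = 2, so M.m 2 = 1; blocks 2 0
        have h2 : M.m 2 = 1 := by rw [← h1, M.invol]
        refine hbp M 2 0 ⟨(hacc 2 0).mpr (by decide), Or.inr ?_, Or.inl h0⟩
        rw [h2]; exact (hpref 2 0 1).mpr (by decide)
    · -- M.m 0 = 1, M.m 1 = 0, M.m 2 = 2; blocks 1 2
      have h1 : M.m 1 = 0 := by rw [← h0, M.invol]
      have h2 : M.m 2 = 2 := by
        rcases hA (M.m 2) with h2 | h2 | h2
        · exact absurd (inj 2 1 (by rw [h2, h1])) (by decide)
        · exact absurd (inj 2 0 (by rw [h2, h0])) (by decide)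
        · exact h2
      refine hbp M 1 2 ⟨(hacc 1 2).mpr (by decide), Or.inr ?_, Or.inl h2⟩
      rw [h1]; exact (hpref 1 2 0).mpr (by decide)
    · -- M.m 0 = 2, M.m 2 = 0, M.m 1 = 1; blocks 0 1
      have h2 : M.m 2 = 0 := by rw [← h0, M.invol]
      have h1 : M.m 1 = 1 := by
        rcases hA (M.m 1) with h1 | h1 | h1
        · exact absurd (inj 1 2 (by rw [h1, h2])) (by decide)
        · exact h1
        · exact absurd (inj 1 0 (by rw [h1, h0])) (by decide)
      refine hbp M 0 1 ⟨(hacc 0 1).mpr (by decide), Or.inr ?_, Or.inl h1⟩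
      rw [h0]; exact (hpref 0 1 2).mpr (by decide)
  · have hAM : ∀ a : Fin 3, (![1, 0, 2] : Fin 3 → Fin 3) a ≠ a →
        I.acc a ((![1, 0, 2] : Fin 3 → Fin 3) a) := by
      intro a ha
      rw [hacc]
      fin_cases a <;> simp_all <;> decide
    have hinv : ∀ a : Fin 3, (![1, 0, 2] : Fin 3 → Fin 3) ((![1, 0, 2] : Fin 3 → Fin 3) a) = a := by
      decide
    refine ⟨⟨![1, 0, 2], hinv, hAM⟩, rfl, rfl, rfl, ?_⟩
    set M : Matching I := ⟨![1, 0, 2], hinv, hAM⟩ with hMdef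
    have hb : ∀ a b, blocks I M a b ↔ (a = 1 ∧ b = 2) ∨ (a = 2 ∧ b = 1) := by
      intro a b
      simp only [blocks, hacc, hpref]
      fin_cases a <;> fin_cases b <;> simp only [hMdef] <;> decide
    have hb0 : bpa I M 0 = 0 := by
      unfold bpa
      have : {b | blocks I M 0 b} = ∅ := by ext b; simp [hb]
      rw [this, Set.ncard_empty]
    have hb1 : bpa I M 1 = 1 := by
      unfold bpa
      have : {b | blocks I M 1 b} = {2} := by ext b; simp [hb]
      rw [this, Set.ncard_singleton]
    have hb2 : bpa I M 2 = 1 := by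
      unfold bpa
      have : {b | blocks I M 2 b} = {1} := by ext b; simp [hb]
      rw [this, Set.ncard_singleton]
    apply le_antisymm
    · apply csSup_le (Set.range_nonempty _)
      rintro x ⟨a, rfl⟩
      rcases hA a with h | h | h <;> subst h <;> simp [hb0, hb1, hb2]
    · exact le_csSup (Set.finite_range _).bddAbove ⟨1, hb1⟩
end

section
/- For every positive integer k there exists an SRI instance with 3^k agents and complete preference lists (every agent ranks all other agents) such that the minimum over all matchings M of the maximum over agents a of |bp_a(M)| equals exactly k. -/
namespace S5

/-- rank key: agent `a` prefers `b` to `c` iff `Kf k a b < Kf k a c`. -/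
def Kf : ℕ → ℕ → ℕ → ℕ
  | 0, _, _ => 0
  | k+1, a, b =>
    if a / 3^k = b / 3^k then Kf k (a % 3^k) (b % 3^k)
    else ((b / 3^k + 3 - a / 3^k) % 3) * 3^k + b % 3^k

lemma m_pos (k : ℕ) : 0 < 3^k := pow_pos (by norm_num) k

lemma pow_succ3 (k : ℕ) : 3^(k+1) = 3 * 3^k := by rw [pow_succ]; ring

lemma Kf_lt (k a b : ℕ) : Kf k a b < 3^k := by
  induction k generalizing a b with
  | zero => simp [Kf]
  | succ k ih =>
    have hm := m_pos k
    have h1 : b % 3^k < 3^k := Nat.mod_lt _ hm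
    have h3 := pow_succ3 k
    rw [Kf]
    split
    · have := ih (a % 3^k) (b % 3^k); omega
    · rename_i h
      have h5 : (b / 3^k + 3 - a / 3^k) % 3 = 0 ∨ (b / 3^k + 3 - a / 3^k) % 3 = 1
          ∨ (b / 3^k + 3 - a / 3^k) % 3 = 2 := by omega
      rcases h5 with h5|h5|h5 <;> rw [h5] <;> omega

lemma div_lt_3 {k a : ℕ} (ha : a < 3^(k+1)) : a / 3^k < 3 :=
  Nat.div_lt_of_lt_mul (by rw [pow_succ3] at ha; omega)

lemma decomp {k a : ℕ} (ha : a < 3^(k+1)) :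
    ∃ i r, i < 3 ∧ r < 3^k ∧ a = i * 3^k + r :=
  ⟨a / 3^k, a % 3^k, div_lt_3 ha, Nat.mod_lt _ (m_pos k), by
    rw [mul_comm]; have := Nat.div_add_mod a (3^k); omega⟩

lemma dm_div {k q r : ℕ} (hr : r < 3^k) : (q * 3^k + r) / 3^k = q := by
  rw [mul_comm, Nat.mul_add_div (m_pos k), Nat.div_eq_of_lt hr, add_zero]

lemma dm_mod {k q r : ℕ} (hr : r < 3^k) : (q * 3^k + r) % 3^k = r := by
  rw [mul_comm, Nat.mul_add_mod, Nat.mod_eq_of_lt hr]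

lemma Kf_eval {k i r j s : ℕ} (hr : r < 3^k) (hs : s < 3^k) :
    Kf (k+1) (i * 3^k + r) (j * 3^k + s) =
      if i = j then Kf k r s else ((j + 3 - i) % 3) * 3^k + s := by
  rw [Kf, dm_div hr, dm_div hs, dm_mod hr, dm_mod hs]

lemma Kf_inj (k : ℕ) : ∀ a b c : ℕ, a < 3^k → b < 3^k → c < 3^k →
    b ≠ c → Kf k a b ≠ Kf k a c := by
  induction k with
  | zero => intro a b c ha hb hc hbc; omega
  | succ k ih =>
    intro a b c ha hb hc hbc
    have hm := m_pos k
    obtain ⟨i, r, hi, hr, rfl⟩ := decomp ha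
    obtain ⟨j, s, hj, hs, rfl⟩ := decomp hb
    obtain ⟨l, t, hl, ht, rfl⟩ := decomp hc
    rw [Kf_eval hr hs, Kf_eval hr ht]
    by_cases hij : i = j <;> by_cases hil : i = l
    · rw [if_pos hij, if_pos hil]
      refine ih r s t (by omega) hs ht ?_
      intro h; exact hbc (by rw [h, ← hij, ← hil])
    · have hK1 := Kf_lt k r s
      subst hij
      rw [if_pos rfl, if_neg hil]
      interval_cases i <;> interval_cases l <;> norm_num <;> omega
    · have hK2 := Kf_lt k r t
      subst hil
      rw [if_neg hij, if_pos rfl]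
      interval_cases i <;> interval_cases j <;> norm_num <;> omega
    · rw [if_neg hij, if_neg hil]
      by_cases hjl : j = l
      · subst hjl
        have hst : s ≠ t := by intro h; exact hbc (by rw [h])
        intro h; exact hst (Nat.add_left_cancel h)
      · clear hbc
        interval_cases i <;> interval_cases j <;> interval_cases l <;>
          norm_num <;> omega

/-- The SRI instance. -/
def inst (k : ℕ) : SRI (Fin (3^k)) where
  acc a b := a ≠ b
  acc_symm _ _ h := h.symm
  acc_irrefl _ h := h rfl
  pref a b c := a ≠ b ∧ a ≠ c ∧ Kf k a.val b.val < Kf k a.val c.val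
  pref_acc _ _ _ h := ⟨h.1, h.2.1⟩
  pref_trans _ _ _ _ h1 h2 := ⟨h1.1, h2.2.1, lt_trans h1.2.2 h2.2.2⟩
  pref_irrefl _ _ h := lt_irrefl _ h.2.2
  pref_total a b c hab hac hbc := by
    have : Kf k a.val b.val ≠ Kf k a.val c.val :=
      Kf_inj k a.val b.val c.val a.isLt b.isLt c.isLt (fun h => hbc (Fin.ext h))
    rcases Nat.lt_or_ge (Kf k a.val b.val) (Kf k a.val c.val) with h|h
    · exact Or.inl ⟨hab, hac, h⟩
    · exact Or.inr ⟨hac, hab, by omega⟩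

end S5

namespace S5

-- ### embeddings and groups

def emb (k i : ℕ) (hi : i < 3) (x : Fin (3^k)) : Fin (3^(k+1)) :=
  ⟨i * 3^k + x.val, by
    have h := x.isLt
    have h2 : i * 3^k ≤ 2 * 3^k := Nat.mul_le_mul_right _ (by omega)
    have := pow_succ3 k; omega⟩

def grp {k : ℕ} (x : Fin (3^(k+1))) : ℕ := x.val / 3^k

lemma grp_lt {k : ℕ} (x : Fin (3^(k+1))) : grp x < 3 := div_lt_3 x.isLt

lemma emb_val {k i : ℕ} (hi : i < 3) (x : Fin (3^k)) :
    (emb k i hi x).val = i * 3^k + x.val := rfl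

lemma emb_grp {k i : ℕ} (hi : i < 3) (x : Fin (3^k)) : grp (emb k i hi x) = i :=
  dm_div x.isLt

lemma emb_res {k i : ℕ} (hi : i < 3) (x : Fin (3^k)) :
    (emb k i hi x).val % 3^k = x.val := dm_mod x.isLt

lemma emb_inj {k i : ℕ} (hi : i < 3) : Function.Injective (emb k i hi) := by
  intro x y h
  have : (emb k i hi x).val = (emb k i hi y).val := by rw [h]
  rw [emb_val, emb_val] at this
  exact Fin.ext (by omega)

lemma eq_emb {k i : ℕ} (hi : i < 3) (x : Fin (3^(k+1))) (hx : grp x = i) :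
    x = emb k i hi ⟨x.val % 3^k, Nat.mod_lt _ (m_pos k)⟩ := by
  apply Fin.ext
  show x.val = i * 3^k + x.val % 3^k
  have h2 : x.val % 3^k + x.val / 3^k * 3^k = x.val := Nat.mod_add_div' _ _
  rw [← hx]; unfold grp; omega

lemma grp_ne_of_emb_ne {k : ℕ} {x y : Fin (3^(k+1))} (h : grp x ≠ grp y) : x ≠ y :=
  fun e => h (by rw [e])

-- ### Kf comparison lemmas on Fin values

lemma Kf_same_val {k : ℕ} (a b : Fin (3^(k+1))) (h : grp a = grp b) :
    Kf (k+1) a.val b.val = Kf k (a.val % 3^k) (b.val % 3^k) := by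
  unfold grp at h; rw [Kf, if_pos h]

lemma Kf_cross_ge {k : ℕ} (a b : Fin (3^(k+1))) (h : grp a ≠ grp b) :
    3^k ≤ Kf (k+1) a.val b.val := by
  unfold grp at h
  have h1 := div_lt_3 a.isLt
  have h2 := div_lt_3 b.isLt
  rw [Kf, if_neg h]
  have h3 : 1 ≤ (b.val / 3^k + 3 - a.val / 3^k) % 3 := by
    generalize a.val / 3^k = p at *
    generalize b.val / 3^k = q at *
    omega
  calc 3^k = 1 * 3^k := (one_mul _).symm
    _ ≤ ((b.val / 3^k + 3 - a.val / 3^k) % 3) * 3^k := Nat.mul_le_mul_right _ h3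
    _ ≤ _ := Nat.le_add_right _ _

/-- key evaluation for cross pairs: block index times `3^k` plus residue. -/
lemma Kf_cross_val {k : ℕ} (a b : Fin (3^(k+1))) (h : grp a ≠ grp b) :
    Kf (k+1) a.val b.val = ((grp b + 3 - grp a) % 3) * 3^k + b.val % 3^k := by
  unfold grp at *; rw [Kf, if_neg h]

lemma Kf_own_lt_cross {k : ℕ} (a b c : Fin (3^(k+1))) (hab : grp a = grp b)
    (hac : grp a ≠ grp c) : Kf (k+1) a.val b.val < Kf (k+1) a.val c.val := by
  have h1 := Kf_same_val a b hab
  have h2 := Kf_cross_ge a c hac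
  have h3 := Kf_lt k (a.val % 3^k) (b.val % 3^k)
  omega

-- ### blocks in `Kf` form

lemma blocks_iff {k : ℕ} (M : Matching (inst k)) (a b : Fin (3^k)) :
    blocks (inst k) M a b ↔ a ≠ b ∧
      (M.m a = a ∨ Kf k a.val b.val < Kf k a.val (M.m a).val) ∧
      (M.m b = b ∨ Kf k b.val a.val < Kf k b.val (M.m b).val) := by
  constructor
  · rintro ⟨hab, h1, h2⟩
    exact ⟨hab, h1.imp id (fun h => h.2.2), h2.imp id (fun h => h.2.2)⟩
  · rintro ⟨hab, h1, h2⟩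
    refine ⟨hab, ?_, ?_⟩
    · rcases h1 with h|h
      · exact Or.inl h
      · by_cases hm : M.m a = a
        · exact Or.inl hm
        · exact Or.inr ⟨hab, fun e => hm e.symm, h⟩
    · rcases h2 with h|h
      · exact Or.inl h
      · by_cases hm : M.m b = b
        · exact Or.inl hm
        · exact Or.inr ⟨hab.symm, fun e => hm e.symm, h⟩

-- ### induced matching on a group

def imap {k : ℕ} (M : Matching (inst (k+1))) (i : ℕ) (hi : i < 3) :
    Matching (inst k) where
  m x := if grp (M.m (emb k i hi x)) = i
    then ⟨(M.m (emb k i hi x)).val % 3^k, Nat.mod_lt _ (m_pos k)⟩ else x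
  invol := by
    intro x
    by_cases h : grp (M.m (emb k i hi x)) = i
    · rw [if_pos h]
      have hyemb : emb k i hi ⟨(M.m (emb k i hi x)).val % 3^k, Nat.mod_lt _ (m_pos k)⟩
          = M.m (emb k i hi x) := (eq_emb hi _ h).symm
      rw [hyemb, M.invol, emb_grp, if_pos rfl]
      apply Fin.ext
      exact emb_res hi x
    · rw [if_neg h, if_neg h]
  acc_matched := fun a h => fun e => h e.symm

lemma imap_m_pos {k : ℕ} (M : Matching (inst (k+1))) (i : ℕ) (hi : i < 3)
    (x : Fin (3^k)) (h : grp (M.m (emb k i hi x)) = i) :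
    (imap M i hi).m x = ⟨(M.m (emb k i hi x)).val % 3^k, Nat.mod_lt _ (m_pos k)⟩ := by
  unfold imap; dsimp only; rw [if_pos h]

lemma imap_m_pos' {k : ℕ} (M : Matching (inst (k+1))) (i : ℕ) (hi : i < 3)
    (x : Fin (3^k)) (h : grp (M.m (emb k i hi x)) = i) :
    emb k i hi ((imap M i hi).m x) = M.m (emb k i hi x) := by
  rw [imap_m_pos M i hi x h]
  exact (eq_emb hi _ h).symm

lemma imap_m_neg {k : ℕ} (M : Matching (inst (k+1))) (i : ℕ) (hi : i < 3)
    (x : Fin (3^k)) (h : ¬ grp (M.m (emb k i hi x)) = i) :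
    (imap M i hi).m x = x := by
  unfold imap; dsimp only; rw [if_neg h]

lemma imap_fix_iff {k : ℕ} (M : Matching (inst (k+1))) (i : ℕ) (hi : i < 3)
    (x : Fin (3^k)) :
    (imap M i hi).m x = x ↔
      (M.m (emb k i hi x) = emb k i hi x ∨ grp (M.m (emb k i hi x)) ≠ i) := by
  by_cases h : grp (M.m (emb k i hi x)) = i
  · rw [imap_m_pos M i hi x h]
    constructor
    · intro he
      exact Or.inl ((eq_emb hi _ h).trans (congrArg _ he))
    · intro he
      rcases he with he|he
      · apply Fin.ext
        show (M.m (emb k i hi x)).val % 3^k = x.val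
        rw [he, emb_res]
      · exact absurd h he
  · rw [imap_m_neg M i hi x h]
    simp [h]

/-- per-agent side condition transfers between `M` and the induced matching. -/
lemma side_iff {k : ℕ} (M : Matching (inst (k+1))) (i : ℕ) (hi : i < 3)
    (x y : Fin (3^k)) :
    (M.m (emb k i hi x) = emb k i hi x ∨
      Kf (k+1) (emb k i hi x).val (emb k i hi y).val
        < Kf (k+1) (emb k i hi x).val (M.m (emb k i hi x)).val) ↔
    ((imap M i hi).m x = x ∨
      Kf k x.val y.val < Kf k x.val ((imap M i hi).m x).val) := by
  by_cases h : grp (M.m (emb k i hi x)) = i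
  · by_cases he : M.m (emb k i hi x) = emb k i hi x
    · have : (imap M i hi).m x = x := (imap_fix_iff M i hi x).2 (Or.inl he)
      simp [he, this]
    · have hfix : ¬ (imap M i hi).m x = x := by
        rw [imap_fix_iff M i hi x]; push_neg; exact ⟨he, h⟩
      have e1 : Kf (k+1) (emb k i hi x).val (emb k i hi y).val = Kf k x.val y.val := by
        rw [Kf_same_val _ _ (by rw [emb_grp, emb_grp]), emb_res, emb_res]
      have e2 : Kf (k+1) (emb k i hi x).val (M.m (emb k i hi x)).val
          = Kf k x.val ((imap M i hi).m x).val := by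
        rw [Kf_same_val _ _ (by rw [emb_grp, h]), emb_res, imap_m_pos M i hi x h]
      rw [e1, e2]
      simp [he, hfix]
  · have hfix : (imap M i hi).m x = x := imap_m_neg M i hi x h
    have hne : M.m (emb k i hi x) ≠ emb k i hi x := by
      intro e; rw [e, emb_grp] at h; exact h rfl
    have hlt : Kf (k+1) (emb k i hi x).val (emb k i hi y).val
        < Kf (k+1) (emb k i hi x).val (M.m (emb k i hi x)).val :=
      Kf_own_lt_cross _ _ _ (by rw [emb_grp, emb_grp]) (by rw [emb_grp]; exact fun e => h e.symm)
    simp [hfix, hlt]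

/-- blocking transfers between `M` and the induced matching (within a group). -/
lemma blocks_emb_iff {k : ℕ} (M : Matching (inst (k+1))) (i : ℕ) (hi : i < 3)
    (x y : Fin (3^k)) :
    blocks (inst (k+1)) M (emb k i hi x) (emb k i hi y) ↔
      blocks (inst k) (imap M i hi) x y := by
  rw [blocks_iff, blocks_iff]
  constructor
  · rintro ⟨hab, h1, h2⟩
    exact ⟨fun e => hab (congrArg _ e), (side_iff M i hi x y).1 h1,
      (side_iff M i hi y x).1 h2⟩
  · rintro ⟨hab, h1, h2⟩
    exact ⟨fun e => hab (emb_inj hi e), (side_iff M i hi x y).2 h1,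
      (side_iff M i hi y x).2 h2⟩

end S5

namespace S5

lemma invol_parity_aux {α : Type} [Fintype α] :
    ∀ (n : ℕ) (S : Set α) (σ : α → α), S.ncard ≤ n →
    (∀ x ∈ S, σ x ∈ S) → (∀ x ∈ S, σ (σ x) = x) →
    S.ncard % 2 = {x | x ∈ S ∧ σ x = x}.ncard % 2 := by
  intro n
  induction n with
  | zero =>
    intro S σ hn h1 h2
    have hS : S = ∅ := by
      rw [← Set.ncard_eq_zero S.toFinite]; omega
    have h2 : {x | x ∈ S ∧ σ x = x} = ∅ := by
      rw [hS]; ext y; simp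
    rw [h2, hS]
  | succ n ih =>
    intro S σ hn h1 h2
    by_cases hex : ∃ x ∈ S, σ x ≠ x
    · obtain ⟨x, hx, hσx⟩ := hex
      have hσxS : σ x ∈ S := h1 x hx
      have hxne : x ≠ σ x := fun e => hσx e.symm
      have hsub : {x, σ x} ⊆ S := by
        intro y hy; rcases hy with hy|hy
        · rw [hy]; exact hx
        · rw [Set.mem_singleton_iff] at hy; rw [hy]; exact hσxS
      have hpair : ({x, σ x} : Set α).ncard = 2 := Set.ncard_pair hxne
      have hS2 : 2 ≤ S.ncard := by
        rw [← hpair]; exact Set.ncard_le_ncard hsub S.toFinite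
      set S' := S \ {x, σ x} with hS'
      have hcard : S'.ncard = S.ncard - 2 := by
        rw [hS', Set.ncard_diff hsub, hpair]
      have h1' : ∀ y ∈ S', σ y ∈ S' := by
        intro y hy
        obtain ⟨hyS, hyn⟩ := hy
        simp only [Set.mem_insert_iff, Set.mem_singleton_iff] at hyn
        push_neg at hyn
        refine ⟨h1 y hyS, ?_⟩
        simp only [Set.mem_insert_iff, Set.mem_singleton_iff]
        push_neg
        constructor
        · intro e
          exact hyn.2 (by rw [← h2 y hyS, e])
        · intro e
          exact hyn.1 (by rw [← h2 y hyS, e, h2 x hx])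
      have h2' : ∀ y ∈ S', σ (σ y) = y := fun y hy => h2 y hy.1
      have hfixeq : {y | y ∈ S' ∧ σ y = y} = {y | y ∈ S ∧ σ y = y} := by
        ext y
        simp only [Set.mem_setOf_eq, hS', Set.mem_diff, Set.mem_insert_iff,
          Set.mem_singleton_iff]
        constructor
        · rintro ⟨⟨h, _⟩, hfix⟩; exact ⟨h, hfix⟩
        · rintro ⟨h, hfix⟩
          refine ⟨⟨h, ?_⟩, hfix⟩
          push_neg
          constructor
          · rintro rfl; exact hσx hfix
          · rintro rfl; exact hσx (by rw [h2 x hx] at hfix; exact hfix.symm)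
      have hrec := ih S' σ (by omega) h1' h2'
      rw [hfixeq] at hrec
      omega
    · push_neg at hex
      have h3 : {x | x ∈ S ∧ σ x = x} = S := by
        ext y; simp only [Set.mem_setOf_eq]
        exact ⟨fun h => h.1, fun h => ⟨h, hex y h⟩⟩
      rw [h3]

lemma invol_parity {α : Type} [Fintype α] (S : Set α) (σ : α → α)
    (h1 : ∀ x ∈ S, σ x ∈ S) (h2 : ∀ x ∈ S, σ (σ x) = x) :
    S.ncard % 2 = {x | x ∈ S ∧ σ x = x}.ncard % 2 :=
  invol_parity_aux S.ncard S σ le_rfl h1 h2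

lemma ncard_univ_fin (n : ℕ) : (Set.univ : Set (Fin n)).ncard = n := by
  rw [Set.ncard_univ, Nat.card_eq_fintype_card, Fintype.card_fin]

lemma grp_set_eq {k i : ℕ} (hi : i < 3) :
    {x : Fin (3^(k+1)) | grp x = i} = Set.range (emb k i hi) := by
  ext x
  constructor
  · intro hx; exact ⟨_, (eq_emb hi x hx).symm⟩
  · rintro ⟨y, rfl⟩; exact emb_grp hi y

lemma ncard_grp {k i : ℕ} (hi : i < 3) :
    {x : Fin (3^(k+1)) | grp x = i}.ncard = 3^k := by
  rw [grp_set_eq hi, ← Set.image_univ, Set.ncard_image_of_injective _ (emb_inj hi),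
    ncard_univ_fin]

lemma pow3_odd (k : ℕ) : 3^k % 2 = 1 :=
  Nat.odd_iff.1 (Odd.pow (by decide))

end S5

namespace S5

/-- fixed points of the group-restricted involution, as a union. -/
lemma parity_grp {k : ℕ} (M : Matching (inst (k+1))) (j : ℕ) (hj : j < 3) :
    ({a : Fin (3^(k+1)) | grp a = j ∧ M.m a = a} ∪
      {a : Fin (3^(k+1)) | grp a = j ∧ grp (M.m a) ≠ j}).ncard % 2 = 1 := by
  set σ : Fin (3^(k+1)) → Fin (3^(k+1)) :=
    fun a => if grp (M.m a) = j then M.m a else a with hσ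
  have h1 : ∀ x ∈ {a : Fin (3^(k+1)) | grp a = j}, σ x ∈ {a | grp a = j} := by
    intro x hx
    by_cases h : grp (M.m x) = j
    · simp only [hσ, if_pos h]; exact h
    · simp only [hσ, if_neg h]; exact hx
  have h2 : ∀ x ∈ {a : Fin (3^(k+1)) | grp a = j}, σ (σ x) = x := by
    intro x hx
    by_cases h : grp (M.m x) = j
    · simp only [hσ, if_pos h]
      rw [if_pos (by rw [M.invol]; exact hx), M.invol]
    · simp only [hσ, if_neg h, if_neg h]
  have hp := invol_parity {a : Fin (3^(k+1)) | grp a = j} σ h1 h2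
  have he : {x : Fin (3^(k+1)) | x ∈ {a | grp a = j} ∧ σ x = x} =
      {a : Fin (3^(k+1)) | grp a = j ∧ M.m a = a} ∪
      {a : Fin (3^(k+1)) | grp a = j ∧ grp (M.m a) ≠ j} := by
    ext a
    simp only [Set.mem_setOf_eq, Set.mem_union]
    constructor
    · rintro ⟨hg, hfix⟩
      by_cases h : grp (M.m a) = j
      · rw [hσ] at hfix; simp only [if_pos h] at hfix
        exact Or.inl ⟨hg, hfix⟩
      · exact Or.inr ⟨hg, h⟩
    · rintro (⟨hg, hfix⟩|⟨hg, hne⟩)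
      · refine ⟨hg, ?_⟩
        simp only [hσ]
        rw [hfix, if_pos hg]
      · exact ⟨hg, by simp only [hσ, if_neg hne]⟩
  rw [he] at hp
  rw [← hp, ncard_grp hj, pow3_odd]

/-- The key lower-bound induction: any unmatched agent `u` has at least
`k - 1 + ⌈|U|/2⌉` blocking pairs. -/
lemma Wlem : ∀ (k : ℕ) (M : Matching (inst k)) (u : Fin (3^k)), M.m u = u →
    k + ({a : Fin (3^k) | M.m a = a}.ncard + 1) / 2 ≤ bpa (inst k) M u + 1 := by
  intro k
  induction k with
  | zero =>
    intro M u hMu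
    have h1 : {a : Fin (3^0) | M.m a = a}.ncard ≤ 1 := by
      have := Set.ncard_le_ncard (Set.subset_univ {a : Fin (3^0) | M.m a = a})
        (Set.toFinite _)
      rw [ncard_univ_fin] at this
      exact this
    omega
  | succ k ih =>
    intro M u hMu
    set i := grp u with hgu
    have hi : i < 3 := grp_lt u
    set u' : Fin (3^k) := ⟨u.val % 3^k, Nat.mod_lt _ (m_pos k)⟩ with hu'
    have hu : emb k i hi u' = u := (eq_emb hi u rfl).symm
    set Mi := imap M i hi with hMi
    have hMiu : Mi.m u' = u' := by
      rw [hMi, imap_fix_iff M i hi u']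
      exact Or.inl (by rw [hu, hMu])
    have hIH := ih Mi u' hMiu
    -- names for the sets
    set F := {a : Fin (3^(k+1)) | grp a = i ∧ M.m a = a} with hF
    set C := {a : Fin (3^(k+1)) | grp a = i ∧ grp (M.m a) ≠ i} with hC
    set S2 := {a : Fin (3^(k+1)) | grp a ≠ i ∧ M.m a = a} with hS2
    set S3 := {a : Fin (3^(k+1)) | grp a = (i+2) % 3 ∧ grp (M.m a) = (i+1) % 3}
      with hS3
    set Bi := {y : Fin (3^k) | blocks (inst k) Mi u' y} with hBi
    set B := {b : Fin (3^(k+1)) | blocks (inst (k+1)) M u b} with hB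
    -- (2) : |U(Mi)| = |F| + |C|
    have himg : emb k i hi '' {y : Fin (3^k) | Mi.m y = y} = F ∪ C := by
      ext a
      constructor
      · rintro ⟨y, hy, rfl⟩
        rw [Set.mem_setOf_eq, hMi, imap_fix_iff M i hi y] at hy
        rcases hy with hy|hy
        · exact Or.inl ⟨emb_grp hi y, hy⟩
        · exact Or.inr ⟨emb_grp hi y, hy⟩
      · intro ha
        have hga : grp a = i := by
          rcases ha with h|h
          · exact h.1
          · exact h.1
        refine ⟨⟨a.val % 3^k, Nat.mod_lt _ (m_pos k)⟩, ?_, (eq_emb hi a hga).symm⟩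
        rw [Set.mem_setOf_eq, hMi, imap_fix_iff M i hi _, ← eq_emb hi a hga]
        rcases ha with h|h
        · exact Or.inl h.2
        · exact Or.inr h.2
    have hdFC : Disjoint F C := by
      rw [Set.disjoint_left]
      rintro a ⟨hg, hfix⟩ ⟨_, hne⟩
      exact hne (by rw [hfix]; exact hg)
    have hUMi : {y : Fin (3^k) | Mi.m y = y}.ncard = F.ncard + C.ncard := by
      rw [← Set.ncard_image_of_injective _ (emb_inj hi), himg,
        Set.ncard_union_eq hdFC (Set.toFinite _) (Set.toFinite _)]
    -- (3) parity
    have hpar : (F.ncard + C.ncard) % 2 = 1 := by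
      have := parity_grp M i hi
      rw [Set.ncard_union_eq hdFC (Set.toFinite _) (Set.toFinite _)] at this
      exact this
    -- (1) : |U(M)| = |F| + |S2|
    have hU : {a : Fin (3^(k+1)) | M.m a = a}.ncard = F.ncard + S2.ncard := by
      have he : {a : Fin (3^(k+1)) | M.m a = a} = F ∪ S2 := by
        ext a
        simp only [hF, hS2, Set.mem_setOf_eq, Set.mem_union]
        by_cases h : grp a = i <;> tauto
      have hd : Disjoint F S2 := by
        rw [Set.disjoint_left]
        rintro a ⟨hg, _⟩ ⟨hg', _⟩
        exact hg' hg
      rw [he, Set.ncard_union_eq hd (Set.toFinite _) (Set.toFinite _)]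
    -- (4) : blocking set inclusion
    have hsub : (emb k i hi '' Bi) ∪ S2 ∪ S3 ⊆ B := by
      intro b hb
      rcases hb with (⟨y, hy, rfl⟩|hb)|hb
      · rw [hB, Set.mem_setOf_eq, ← hu]
        exact (blocks_emb_iff M i hi u' y).2 hy
      · obtain ⟨hg, hfix⟩ := hb
        refine ⟨?_, Or.inl hMu, Or.inl hfix⟩
        exact grp_ne_of_emb_ne (by rw [← hgu]; exact fun e => hg e.symm)
      · obtain ⟨hg, hgm⟩ := hb
        have hne1 : grp b ≠ grp u := by rw [hg, ← hgu]; omega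
        have hne2 : grp b ≠ grp (M.m b) := by rw [hg, hgm]; omega
        have hbu : b ≠ u := grp_ne_of_emb_ne hne1
        have hbm : b ≠ M.m b := grp_ne_of_emb_ne hne2
        refine ⟨hbu.symm, Or.inl hMu, Or.inr ⟨hbu, hbm, ?_⟩⟩
        have e1 : Kf (k+1) b.val u.val = 1 * 3^k + u.val % 3^k := by
          rw [Kf_cross_val b u hne1]
          congr 2
          rw [← hgu, hg]; omega
        have e2 : Kf (k+1) b.val (M.m b).val = 2 * 3^k + (M.m b).val % 3^k := by
          rw [Kf_cross_val b (M.m b) hne2]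
          congr 2
          rw [hgm, hg]; omega
        have h3 : u.val % 3^k < 3^k := Nat.mod_lt _ (m_pos k)
        omega
    have hd1 : Disjoint (emb k i hi '' Bi) S2 := by
      rw [Set.disjoint_left]
      rintro a ⟨y, _, rfl⟩ ⟨hg, _⟩
      exact hg (emb_grp hi y)
    have hd2 : Disjoint (emb k i hi '' Bi) S3 := by
      rw [Set.disjoint_left]
      rintro a ⟨y, _, rfl⟩ ⟨hg, _⟩
      rw [emb_grp hi y] at hg
      omega
    have hd3 : Disjoint S2 S3 := by
      rw [Set.disjoint_left]
      rintro a ⟨_, hfix⟩ ⟨hg, hgm⟩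
      rw [hfix, hg] at hgm
      omega
    have hcount : Bi.ncard + S2.ncard + S3.ncard ≤ B.ncard := by
      have e1 : ((emb k i hi '' Bi) ∪ S2 ∪ S3).ncard
          = Bi.ncard + S2.ncard + S3.ncard := by
        rw [Set.ncard_union_eq (by
            rw [Set.disjoint_union_left]; exact ⟨hd2, hd3⟩)
          (Set.toFinite _) (Set.toFinite _),
          Set.ncard_union_eq hd1 (Set.toFinite _) (Set.toFinite _),
          Set.ncard_image_of_injective _ (emb_inj hi)]
      rw [← e1]
      exact Set.ncard_le_ncard hsub (Set.toFinite _)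
    -- (5) : if S2 and S3 empty then C has two elements
    have hP2 : S2.ncard = 0 → S3.ncard = 0 → 2 ≤ C.ncard := by
      intro hs2 hs3
      have hS2e : S2 = ∅ := (Set.ncard_eq_zero (Set.toFinite _)).1 hs2
      have hS3e : S3 = ∅ := (Set.ncard_eq_zero (Set.toFinite _)).1 hs3
      have hgrab : ∀ j, j < 3 → j ≠ i →
          ∃ y : Fin (3^(k+1)), grp y = j ∧ grp (M.m y) ≠ j := by
        intro j hj hji
        have hpj := parity_grp M j hj
        have hFj : {a : Fin (3^(k+1)) | grp a = j ∧ M.m a = a} = ∅ := by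
          rw [Set.eq_empty_iff_forall_notMem]
          rintro a ⟨hg, hfix⟩
          have : a ∈ S2 := ⟨by rw [hg]; exact hji, hfix⟩
          rw [hS2e] at this
          exact this
        rw [hFj, Set.empty_union] at hpj
        have : {a : Fin (3^(k+1)) | grp a = j ∧ grp (M.m a) ≠ j}.Nonempty := by
          apply Set.nonempty_of_ncard_ne_zero
          omega
        obtain ⟨y, hy⟩ := this
        exact ⟨y, hy⟩
      obtain ⟨y, hgy, hgmy⟩ := hgrab ((i+1) % 3) (by omega) (by omega)
      obtain ⟨z, hgz, hgmz⟩ := hgrab ((i+2) % 3) (by omega) (by omega)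
      have hy3 := grp_lt (M.m y)
      have hz3 := grp_lt (M.m z)
      -- M.m y must be in group i
      have hgmyi : grp (M.m y) = i := by
        by_contra hne
        have : grp (M.m y) = (i+2) % 3 := by omega
        have : M.m y ∈ S3 := ⟨this, by rw [M.invol, hgy]⟩
        rw [hS3e] at this; exact this
      have hgmzi : grp (M.m z) = i := by
        by_contra hne
        have : grp (M.m z) = (i+1) % 3 := by omega
        have : z ∈ S3 := ⟨hgz, this⟩
        rw [hS3e] at this; exact this
      have hb1 : M.m y ∈ C := ⟨hgmyi, by rw [M.invol, hgy]; omega⟩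
      have hb2 : M.m z ∈ C := ⟨hgmzi, by rw [M.invol, hgz]; omega⟩
      have hne : M.m y ≠ M.m z := by
        intro e
        have : y = z := by rw [← M.invol y, e, M.invol]
        rw [this, hgz] at hgy
        omega
      have hpsub : {M.m y, M.m z} ⊆ C := by
        intro a ha
        rcases ha with ha|ha
        · rw [ha]; exact hb1
        · rw [Set.mem_singleton_iff] at ha; rw [ha]; exact hb2
      calc 2 = ({M.m y, M.m z} : Set (Fin (3^(k+1)))).ncard :=
          (Set.ncard_pair hne).symm
        _ ≤ C.ncard := Set.ncard_le_ncard hpsub (Set.toFinite _)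
    -- assemble
    have hFu : 1 ≤ F.ncard := by
      have : u ∈ F := ⟨hgu.symm, hMu⟩
      have : ({u} : Set (Fin (3^(k+1)))) ⊆ F := by
        intro a ha; rw [ha]; exact this
      calc 1 = ({u} : Set (Fin (3^(k+1)))).ncard := (Set.ncard_singleton u).symm
        _ ≤ F.ncard := Set.ncard_le_ncard this (Set.toFinite _)
    have hX : bpa (inst k) Mi u' = Bi.ncard := rfl
    have hBb : bpa (inst (k+1)) M u = B.ncard := rfl
    rw [hX] at hIH
    rw [hBb]
    rw [hUMi] at hIH
    rw [hU]
    have hP2' : 1 ≤ S2.ncard ∨ 1 ≤ S3.ncard ∨ 2 ≤ C.ncard := by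
      rcases Nat.eq_zero_or_pos S2.ncard with h|h
      · rcases Nat.eq_zero_or_pos S3.ncard with h'|h'
        · exact Or.inr (Or.inr (hP2 h h'))
        · exact Or.inr (Or.inl h')
      · exact Or.inl h
    omega

end S5

namespace S5

def mstarf : ℕ → ℕ → ℕ
  | 0, a => a
  | k+1, a =>
    if a % 3^k = 3^k - 1 then
      (if a / 3^k = 0 then a + 3^k else if a / 3^k = 1 then a - 3^k else a)
    else (a / 3^k) * 3^k + mstarf k (a % 3^k)

lemma mstarf_eval {k i r : ℕ} (hr : r < 3^k) :
    mstarf (k+1) (i * 3^k + r) =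
      if r = 3^k - 1 then
        (if i = 0 then (i * 3^k + r) + 3^k else if i = 1 then (i * 3^k + r) - 3^k
          else i * 3^k + r)
      else i * 3^k + mstarf k r := by
  rw [mstarf, dm_div hr, dm_mod hr]

lemma mstarf_lt {k a : ℕ} (ha : a < 3^k) : mstarf k a < 3^k := by
  induction k generalizing a with
  | zero => simpa [mstarf] using ha
  | succ k ih =>
    obtain ⟨i, r, hi, hr, rfl⟩ := decomp ha
    rw [mstarf_eval hr]
    have hm := m_pos k
    have h3 := pow_succ3 k
    have hrec := fun (h : r < 3^k) => ih h
    by_cases h1 : r = 3^k - 1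
    · rw [if_pos h1]
      interval_cases i <;> norm_num <;> omega
    · rw [if_neg h1]
      have := ih hr
      interval_cases i <;> omega

lemma mstarf_top (k : ℕ) : mstarf k (3^k - 1) = 3^k - 1 := by
  induction k with
  | zero => rfl
  | succ k ih =>
    have hm := m_pos k
    have h3 := pow_succ3 k
    have he : 3^(k+1) - 1 = 2 * 3^k + (3^k - 1) := by omega
    rw [he, mstarf_eval (by omega)]
    norm_num

lemma mstarf_fix_iff {k a : ℕ} (ha : a < 3^k) : mstarf k a = a ↔ a = 3^k - 1 := by
  induction k generalizing a with
  | zero => simp [mstarf]; omega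
  | succ k ih =>
    obtain ⟨i, r, hi, hr, rfl⟩ := decomp ha
    rw [mstarf_eval hr]
    have hm := m_pos k
    have h3 := pow_succ3 k
    by_cases h1 : r = 3^k - 1
    · rw [if_pos h1]
      subst h1
      interval_cases i <;> norm_num <;> omega
    · rw [if_neg h1]
      have hne : mstarf k r ≠ r := fun e => h1 ((ih hr).1 e)
      constructor
      · intro h; exact absurd (Nat.add_left_cancel h) hne
      · intro h; exfalso; interval_cases i <;> omega

lemma mstarf_u0 (k : ℕ) : mstarf (k+1) (3^k - 1) = 2 * 3^k - 1 := by
  have hm := m_pos k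
  rw [show 3^k - 1 = 0 * 3^k + (3^k - 1) by omega, mstarf_eval (by omega)]
  norm_num
  omega

lemma mstarf_u1 (k : ℕ) : mstarf (k+1) (2 * 3^k - 1) = 3^k - 1 := by
  have hm := m_pos k
  rw [show 2 * 3^k - 1 = 1 * 3^k + (3^k - 1) by omega, mstarf_eval (by omega)]
  norm_num

lemma mstarf_u2 (k : ℕ) : mstarf (k+1) (3 * 3^k - 1) = 3 * 3^k - 1 := by
  have hm := m_pos k
  rw [show 3 * 3^k - 1 = 2 * 3^k + (3^k - 1) by omega, mstarf_eval (by omega)]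
  norm_num

lemma mstarf_invol {k a : ℕ} (ha : a < 3^k) : mstarf k (mstarf k a) = a := by
  induction k generalizing a with
  | zero => simp [mstarf]
  | succ k ih =>
    obtain ⟨i, r, hi, hr, rfl⟩ := decomp ha
    rw [mstarf_eval hr]
    have hm := m_pos k
    have h3 := pow_succ3 k
    by_cases h1 : r = 3^k - 1
    · rw [if_pos h1]
      subst h1
      have hu0 := mstarf_u0 k
      have hu1 := mstarf_u1 k
      have hu2 := mstarf_u2 k
      interval_cases i
      · rw [if_pos rfl, show 0 * 3^k + (3^k - 1) + 3^k = 2 * 3^k - 1 by omega, hu1]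
        omega
      · rw [if_neg (by norm_num), if_pos rfl,
          show 1 * 3^k + (3^k - 1) - 3^k = 3^k - 1 by omega, hu0]
        omega
      · rw [if_neg (by norm_num), if_neg (by norm_num),
          show 2 * 3^k + (3^k - 1) = 3 * 3^k - 1 by omega, hu2]
    · rw [if_neg h1]
      have h2 : mstarf k r < 3^k := mstarf_lt hr
      have h4 : mstarf k r ≠ 3^k - 1 := by
        intro e
        have := mstarf_top k
        have := ih hr
        rw [e] at this  -- mstarf k (3^k - 1) = r
        omega
      rw [mstarf_eval h2, if_neg h4, ih hr]

def Mstar (k : ℕ) : Matching (inst k) where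
  m a := ⟨mstarf k a.val, mstarf_lt a.isLt⟩
  invol a := Fin.ext (mstarf_invol a.isLt)
  acc_matched a h := fun e => h e.symm

lemma matching_eq {A : Type} {I : SRI A} (M M' : Matching I) (h : M.m = M'.m) :
    M = M' := by
  cases M; cases M'; simpa using h

lemma imap_mstar {k : ℕ} (i : ℕ) (hi : i < 3) :
    imap (Mstar (k+1)) i hi = Mstar k := by
  apply matching_eq
  funext x
  have hm := m_pos k
  have hem : (emb k i hi x).val = i * 3^k + x.val := rfl
  have hMval : ((Mstar (k+1)).m (emb k i hi x)).val
      = mstarf (k+1) (i * 3^k + x.val) := rfl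
  by_cases h1 : x.val = 3^k - 1
  · have hfixk : (Mstar k).m x = x := Fin.ext (by
      show mstarf k x.val = x.val
      rw [h1]; exact mstarf_top k)
    rw [hfixk]
    have hval : mstarf (k+1) (i * 3^k + x.val)
        = if i = 0 then (i * 3^k + x.val) + 3^k
          else if i = 1 then (i * 3^k + x.val) - 3^k else i * 3^k + x.val := by
      rw [mstarf_eval x.isLt, if_pos h1]
    clear hval
    interval_cases i
    · -- grp of partner is 1 ≠ 0
      apply imap_m_neg
      intro hgr
      have hv : ((Mstar (k+1)).m (emb k 0 hi x)).val = 2 * 3^k - 1 := by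
        rw [hMval, show 0 * 3^k + x.val = 3^k - 1 by omega, mstarf_u0]
      rw [show grp ((Mstar (k+1)).m (emb k 0 hi x))
          = ((Mstar (k+1)).m (emb k 0 hi x)).val / 3^k from rfl, hv,
        show 2 * 3^k - 1 = 1 * 3^k + (3^k - 1) by omega, dm_div (by omega)] at hgr
      omega
    · apply imap_m_neg
      intro hgr
      have hv : ((Mstar (k+1)).m (emb k 1 hi x)).val = 3^k - 1 := by
        rw [hMval, show 1 * 3^k + x.val = 2 * 3^k - 1 by omega, mstarf_u1]
      rw [show grp ((Mstar (k+1)).m (emb k 1 hi x))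
          = ((Mstar (k+1)).m (emb k 1 hi x)).val / 3^k from rfl, hv,
        Nat.div_eq_of_lt (by omega)] at hgr
      omega
    · -- fixed point
      have hfix : (Mstar (k+1)).m (emb k 2 hi x) = emb k 2 hi x := by
        apply Fin.ext
        rw [hMval, hem, show 2 * 3^k + x.val = 3 * 3^k - 1 by omega, mstarf_u2]
      rw [imap_fix_iff]
      exact Or.inl hfix
  · -- internally matched
    have hval : mstarf (k+1) (i * 3^k + x.val) = i * 3^k + mstarf k x.val := by
      rw [mstarf_eval x.isLt, if_neg h1]
    have hgr : grp ((Mstar (k+1)).m (emb k i hi x)) = i := by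
      show ((Mstar (k+1)).m (emb k i hi x)).val / 3^k = i
      rw [hMval, hval, dm_div (mstarf_lt x.isLt)]
    rw [imap_m_pos _ _ _ _ hgr]
    apply Fin.ext
    show ((Mstar (k+1)).m (emb k i hi x)).val % 3^k = mstarf k x.val
    rw [hMval, hval, dm_mod (mstarf_lt x.isLt)]

end S5

namespace S5

lemma mstar_matched_side {k : ℕ} (x c : Fin (3^(k+1))) (hx : x.val % 3^k ≠ 3^k - 1)
    (hc : grp c ≠ grp x) :
    ¬ ((Mstar (k+1)).m x = x ∨
       Kf (k+1) x.val c.val < Kf (k+1) x.val ((Mstar (k+1)).m x).val) := by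
  obtain ⟨i, r, hi, hr, hxval⟩ := decomp x.isLt
  have hrr : x.val % 3^k = r := by rw [hxval, dm_mod hr]
  have hgx : grp x = i := by show x.val / 3^k = i; rw [hxval, dm_div hr]
  have hrne : r ≠ 3^k - 1 := fun e => hx (hrr.trans e)
  have hMx : ((Mstar (k+1)).m x).val = i * 3^k + mstarf k r := by
    show mstarf (k+1) x.val = _
    rw [hxval, mstarf_eval hr, if_neg hrne]
  have hMgrp : grp ((Mstar (k+1)).m x) = i := by
    show _ / 3^k = i; rw [hMx, dm_div (mstarf_lt hr)]
  have hne : (Mstar (k+1)).m x ≠ x := by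
    intro e
    have hv := congrArg Fin.val e
    rw [hMx, hxval] at hv
    exact hrne ((mstarf_fix_iff hr).1 (Nat.add_left_cancel hv))
  have h1 : Kf (k+1) x.val ((Mstar (k+1)).m x).val < 3^k := by
    rw [Kf_same_val x _ (by rw [hgx, hMgrp])]
    exact Kf_lt k _ _
  have h2 := Kf_cross_ge x c (fun e => hc e.symm)
  push_neg
  exact ⟨hne, by omega⟩

lemma mstar_u0_side {k : ℕ} (x c : Fin (3^(k+1))) (hx : x.val = 3^k - 1)
    (hgc : grp c ≠ 0) (hrc : c.val % 3^k = 3^k - 1) :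
    ¬ ((Mstar (k+1)).m x = x ∨
       Kf (k+1) x.val c.val < Kf (k+1) x.val ((Mstar (k+1)).m x).val) := by
  have hm := m_pos k
  have hgx : grp x = 0 := by
    show x.val / 3^k = 0; rw [hx]; exact Nat.div_eq_of_lt (by omega)
  have hMx : ((Mstar (k+1)).m x).val = 2 * 3^k - 1 := by
    show mstarf (k+1) x.val = _; rw [hx, mstarf_u0]
  have hMgrp : grp ((Mstar (k+1)).m x) = 1 := by
    show _ / 3^k = 1
    rw [hMx, show 2*3^k - 1 = 1*3^k + (3^k-1) by omega, dm_div (by omega)]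
  have hMres : ((Mstar (k+1)).m x).val % 3^k = 3^k - 1 := by
    rw [hMx, show 2*3^k - 1 = 1*3^k + (3^k-1) by omega, dm_mod (by omega)]
  have hgc3 := grp_lt c
  have hKM : Kf (k+1) x.val ((Mstar (k+1)).m x).val = 1 * 3^k + (3^k - 1) := by
    rw [Kf_cross_val x _ (by rw [hgx, hMgrp]; omega), hMgrp, hgx, hMres]
  have hKc : Kf (k+1) x.val c.val = grp c * 3^k + (3^k - 1) := by
    rw [Kf_cross_val x c (by rw [hgx]; exact fun e => hgc e.symm), hgx, hrc]
    congr 2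
    omega
  push_neg
  constructor
  · intro e
    have hv := congrArg Fin.val e
    rw [hMx, hx] at hv
    omega
  · have h : grp c = 1 ∨ grp c = 2 := by omega
    rcases h with h|h <;> rw [h] at hKc <;> rw [hKc, hKM] <;> omega

lemma mstar_cross_block {k : ℕ} (a b : Fin (3^(k+1)))
    (hblk : blocks (inst (k+1)) (Mstar (k+1)) a b) (hg : grp a ≠ grp b) :
    (a.val = 2 * 3^k - 1 ∧ b.val = 3 * 3^k - 1) ∨
    (a.val = 3 * 3^k - 1 ∧ b.val = 2 * 3^k - 1) := by
  have hm := m_pos k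
  rw [blocks_iff] at hblk
  obtain ⟨hab, hsa, hsb⟩ := hblk
  have hra : a.val % 3^k = 3^k - 1 := by
    by_contra h
    exact mstar_matched_side a b h (fun e => hg e.symm) hsa
  have hrb : b.val % 3^k = 3^k - 1 := by
    by_contra h
    exact mstar_matched_side b a h hg hsb
  have hga := grp_lt a
  have hgb := grp_lt b
  have hva : a.val = grp a * 3^k + (3^k - 1) := by
    have h := Nat.mod_add_div' a.val (3^k)
    show a.val = a.val / 3^k * 3^k + (3^k - 1)
    omega
  have hvb : b.val = grp b * 3^k + (3^k - 1) := by
    have h := Nat.mod_add_div' b.val (3^k)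
    show b.val = b.val / 3^k * 3^k + (3^k - 1)
    omega
  have hga0 : grp a ≠ 0 := by
    intro h0
    refine mstar_u0_side a b ?_ ?_ hrb hsa
    · rw [h0] at hva; omega
    · intro e; exact hg (by rw [h0, e])
  have hgb0 : grp b ≠ 0 := by
    intro h0
    refine mstar_u0_side b a ?_ ?_ hra hsb
    · rw [h0] at hvb; omega
    · intro e; exact hg (by rw [h0, e])
  have hcase : (grp a = 1 ∧ grp b = 2) ∨ (grp a = 2 ∧ grp b = 1) := by omega
  rcases hcase with ⟨h1, h2⟩|⟨h1, h2⟩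
  · left; rw [h1] at hva; rw [h2] at hvb; omega
  · right; rw [h1] at hva; rw [h2] at hvb; omega

lemma Mstar_bpa : ∀ (k : ℕ) (a : Fin (3^k)), bpa (inst k) (Mstar k) a ≤ k := by
  intro k
  induction k with
  | zero =>
    intro a
    have hB : {b : Fin (3^0) | blocks (inst 0) (Mstar 0) a b} = ∅ := by
      ext b
      simp only [Set.mem_setOf_eq, Set.mem_empty_iff_false, iff_false]
      intro hb
      apply hb.1
      apply Fin.ext
      have ha := a.isLt; have hb' := b.isLt
      norm_num at ha hb'
      omega
    show {b : Fin (3^0) | blocks (inst 0) (Mstar 0) a b}.ncard ≤ 0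
    rw [hB, Set.ncard_empty]
  | succ k ih =>
    intro a
    have hm := m_pos k
    have h3 := pow_succ3 k
    set i := grp a with hga
    have hi : i < 3 := grp_lt a
    set a' : Fin (3^k) := ⟨a.val % 3^k, Nat.mod_lt _ (m_pos k)⟩ with ha'
    have hae : emb k i hi a' = a := (eq_emb hi a rfl).symm
    set c : Fin (3^(k+1)) := if a.val = 2*3^k - 1 then ⟨3*3^k - 1, by omega⟩
      else ⟨2*3^k - 1, by omega⟩ with hc
    have hsub : {b : Fin (3^(k+1)) | blocks (inst (k+1)) (Mstar (k+1)) a b}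
        ⊆ (emb k i hi '' {y : Fin (3^k) | blocks (inst k) (Mstar k) a' y}) ∪ {c} := by
      intro b hb
      rw [Set.mem_setOf_eq] at hb
      by_cases hgr : grp b = i
      · left
        refine ⟨⟨b.val % 3^k, Nat.mod_lt _ (m_pos k)⟩, ?_, (eq_emb hi b hgr).symm⟩
        rw [Set.mem_setOf_eq]
        have hb' : blocks (inst (k+1)) (Mstar (k+1)) (emb k i hi a')
            (emb k i hi ⟨b.val % 3^k, Nat.mod_lt _ (m_pos k)⟩) := by
          rw [hae, ← eq_emb hi b hgr]; exact hb
        have hres := (blocks_emb_iff (Mstar (k+1)) i hi _ _).1 hb'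
        rwa [imap_mstar i hi] at hres
      · right
        have hgab : grp a ≠ grp b := fun e => hgr (by rw [← e, ← hga])
        rw [Set.mem_singleton_iff]
        rcases mstar_cross_block a b hb hgab with ⟨h1, h2⟩|⟨h1, h2⟩
        · apply Fin.ext
          rw [h2, hc, if_pos h1]
        · apply Fin.ext
          rw [h2, hc, if_neg (by rw [h1]; omega)]
    have hcard : {b : Fin (3^(k+1)) | blocks (inst (k+1)) (Mstar (k+1)) a b}.ncard
        ≤ {y : Fin (3^k) | blocks (inst k) (Mstar k) a' y}.ncard + 1 := by
      calc {b : Fin (3^(k+1)) | blocks (inst (k+1)) (Mstar (k+1)) a b}.ncard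
          ≤ ((emb k i hi '' {y : Fin (3^k) | blocks (inst k) (Mstar k) a' y})
              ∪ {c}).ncard := Set.ncard_le_ncard hsub (Set.toFinite _)
        _ ≤ (emb k i hi '' {y : Fin (3^k) | blocks (inst k) (Mstar k) a' y}).ncard
              + ({c} : Set (Fin (3^(k+1)))).ncard := Set.ncard_union_le _ _
        _ = {y : Fin (3^k) | blocks (inst k) (Mstar k) a' y}.ncard + 1 := by
            rw [Set.ncard_image_of_injective _ (emb_inj hi), Set.ncard_singleton]
    have hih := ih a'
    show {b : Fin (3^(k+1)) | blocks (inst (k+1)) (Mstar (k+1)) a b}.ncard ≤ k + 1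
    have : bpa (inst k) (Mstar k) a'
        = {y : Fin (3^k) | blocks (inst k) (Mstar k) a' y}.ncard := rfl
    omega

end S5

namespace S5

lemma bpa_le (k : ℕ) (M : Matching (inst k)) (a : Fin (3^k)) :
    bpa (inst k) M a ≤ 3^k := by
  show {b : Fin (3^k) | blocks (inst k) M a b}.ncard ≤ 3^k
  calc {b : Fin (3^k) | blocks (inst k) M a b}.ncard
      ≤ (Set.univ : Set (Fin (3^k))).ncard :=
        Set.ncard_le_ncard (Set.subset_univ _) (Set.toFinite _)
    _ = 3^k := ncard_univ_fin _

lemma bdd (k : ℕ) (M : Matching (inst k)) :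
    BddAbove (Set.range fun a => bpa (inst k) M a) := by
  refine ⟨3^k, ?_⟩
  rintro x ⟨a, rfl⟩
  exact bpa_le k M a

lemma exists_unmatched (k : ℕ) (M : Matching (inst k)) :
    ∃ u, M.m u = u := by
  have hp := invol_parity (Set.univ : Set (Fin (3^k))) M.m
    (fun x _ => Set.mem_univ _) (fun x _ => M.invol x)
  rw [ncard_univ_fin, pow3_odd] at hp
  have : {x : Fin (3^k) | x ∈ Set.univ ∧ M.m x = x}.Nonempty := by
    apply Set.nonempty_of_ncard_ne_zero
    omega
  obtain ⟨u, _, hu⟩ := this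
  exact ⟨u, hu⟩

lemma lower (k : ℕ) (M : Matching (inst k)) : k ≤ maxBP (inst k) M := by
  obtain ⟨u, hu⟩ := exists_unmatched k M
  have hW := Wlem k M u hu
  have hmem : u ∈ {a : Fin (3^k) | M.m a = a} := hu
  have h1 : 1 ≤ {a : Fin (3^k) | M.m a = a}.ncard := by
    have : ({u} : Set (Fin (3^k))) ⊆ {a | M.m a = a} := by
      intro x hx; rw [hx]; exact hu
    calc 1 = ({u} : Set (Fin (3^k))).ncard := (Set.ncard_singleton u).symm
      _ ≤ _ := Set.ncard_le_ncard this (Set.toFinite _)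
  have h2 : k ≤ bpa (inst k) M u := by omega
  calc k ≤ bpa (inst k) M u := h2
    _ ≤ maxBP (inst k) M := le_csSup (bdd k M) ⟨u, rfl⟩

lemma upper (k : ℕ) : maxBP (inst k) (Mstar k) = k := by
  apply le_antisymm
  · apply csSup_le
    · have : Nonempty (Fin (3^k)) := ⟨⟨0, m_pos k⟩⟩
      exact Set.range_nonempty _
    · rintro x ⟨a, rfl⟩
      exact Mstar_bpa k a
  · exact lower k (Mstar k)

end S5

/-- For every positive integer k there is an SRI instance with 3^k agents and
complete preference lists whose minimax number of blocking pairs per agent is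
exactly k. -/
theorem stmt5 (k : ℕ) (hk : 0 < k) :
    ∃ I : SRI (Fin (3 ^ k)),
      (∀ a b, a ≠ b → I.acc a b) ∧
      (∀ M : Matching I, k ≤ maxBP I M) ∧
      (∃ M : Matching I, maxBP I M = k) := by
  exact ⟨S5.inst k, fun a b h => h, S5.lower k, S5.Mstar k, S5.upper k⟩
end

section
/- Let I be an SRI instance whose acceptability graph has maximum degree at most 2 (every preference list has length at most 2). Then there exists a matching M of I such that every agent is contained in at most one blocking pair, i.e., the minimax value min over matchings M of max over agents of |bp_a(M)| is at most 1. -/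
lemma blocks_symm {A : Type} {I : SRI A} {M : Matching I} {x y : A}
    (h : blocks I M x y) : blocks I M y x :=
  ⟨I.acc_symm _ _ h.1, h.2.2, h.2.1⟩

lemma acc_ne {A : Type} {I : SRI A} {x y : A} (h : I.acc x y) : x ≠ y :=
  fun e => I.acc_irrefl x (e ▸ h)

lemma mem_of_two {A : Type} [Fintype A] {s : Set A} (hs : s.ncard ≤ 2) {b c w : A}
    (hb : b ∈ s) (hc : c ∈ s) (hw : w ∈ s) (hbc : b ≠ c) : w = b ∨ w = c := by
  by_contra hcon
  push_neg at hcon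
  have hsub : ({w, b, c} : Set A) ⊆ s := by
    intro x hx
    simp only [Set.mem_insert_iff, Set.mem_singleton_iff] at hx
    rcases hx with rfl | rfl | rfl <;> assumption
  have h3 : ({w, b, c} : Set A).ncard = 3 := by
    rw [Set.ncard_insert_of_notMem (by simp [hcon.1, hcon.2]) (Set.toFinite _),
        Set.ncard_insert_of_notMem (by simp [hbc]) (Set.toFinite _),
        Set.ncard_singleton]
  have := Set.ncard_le_ncard hsub (Set.toFinite _)
  omega

lemma key {A : Type} [Fintype A] (I : SRI A) (M : Matching I)
    (hdeg : ∀ a, {b | I.acc a b}.ncard ≤ 2)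
    (hmin : ∀ M' : Matching I, totalBP I M ≤ totalBP I M')
    {a b c : A} (hb : blocks I M a b) (hc : blocks I M a c)
    (hbc : b ≠ c) (hp : I.pref a b c) : False := by
  classical
  have hab : I.acc a b := hb.1
  have hac : I.acc a c := hc.1
  have hanb : a ≠ b := acc_ne hab
  have hanc : a ≠ c := acc_ne hac
  have haM : M.m a = a := by
    by_contra h
    have hacc : I.acc a (M.m a) := M.acc_matched a h
    rcases mem_of_two (hdeg a) hab hac hacc hbc with h1 | h1
    · rcases hb.2.1 with h2 | h2
      · exact h h2
      · rw [h1] at h2; exact I.pref_irrefl a b h2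
    · rcases hc.2.1 with h2 | h2
      · exact h h2
      · rw [h1] at h2; exact I.pref_irrefl a c h2
  have hdinv : M.m (M.m b) = b := M.invol b
  have hda : M.m b ≠ a := by
    intro e
    have h' : M.m a = b := by rw [← e, hdinv]
    rw [haM] at h'; exact hanb h'
  have hbm : M.m b = b ∨ I.pref b a (M.m b) := hb.2.2
  -- the modified matching
  let m' : A → A := fun x => if x = a then b else if x = b then a
    else if x = M.m b then x else M.m x
  have hm'a : m' a = b := by simp [m']
  have hm'b : m' b = a := by simp [m', Ne.symm hanb]
  have hm'o : ∀ x, x ≠ a → x ≠ b → x ≠ M.m b → m' x = M.m x := by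
    intro x h1 h2 h3; simp [m', h1, h2, h3]
  have hinvol : ∀ x, m' (m' x) = x := by
    intro x
    by_cases h1 : x = a
    · rw [h1, hm'a, hm'b]
    by_cases h2 : x = b
    · rw [h2, hm'b, hm'a]
    by_cases h3 : x = M.m b
    · have h4 : M.m b ≠ b := fun e => h2 (h3.trans e)
      have hx : m' x = x := by simp [m', h1, h2, h3, hda, h4]
      rw [hx, hx]
    · have hx : m' x = M.m x := hm'o x h1 h2 h3
      rw [hx]
      have m1 : M.m x ≠ a := fun e => h1 (by rw [← M.invol x, e, haM])
      have m2 : M.m x ≠ b := fun e => h3 (by rw [← M.invol x, e])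
      have m3 : M.m x ≠ M.m b := fun e => h2 (by rw [← M.invol x, e, hdinv])
      rw [hm'o _ m1 m2 m3, M.invol]
  have hacc' : ∀ x, m' x ≠ x → I.acc x (m' x) := by
    intro x hx
    by_cases h1 : x = a
    · rw [h1, hm'a]; exact hab
    by_cases h2 : x = b
    · rw [h2, hm'b]; exact I.acc_symm a b hab
    by_cases h3 : x = M.m b
    · have h4 : M.m b ≠ b := fun e => h2 (h3.trans e)
      exact absurd (by simp [m', h1, h2, h3, hda, h4]) hx
    · rw [hm'o x h1 h2 h3]
      exact M.acc_matched x (by rwa [hm'o x h1 h2 h3] at hx)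
  let M' : Matching I := ⟨m', hinvol, hacc'⟩
  have hM'a : M'.m a = b := hm'a
  have hM'b : M'.m b = a := hm'b
  -- no blocking pair of M' contains a
  have hA : ∀ y, ¬ blocks I M' a y := by
    intro y hy
    have h1 := hy.2.1
    rw [hM'a] at h1
    rcases mem_of_two (hdeg a) hab hac hy.1 hbc with hy1 | hy1
    · rw [hy1] at h1
      rcases h1 with h1 | h1
      · exact hanb h1.symm
      · exact I.pref_irrefl a b h1
    · rw [hy1] at h1
      rcases h1 with h1 | h1
      · exact hanb h1.symm
      · exact I.pref_irrefl a c (I.pref_trans a c b c h1 hp)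
  -- {b, M.m b} does not block M'
  have hbd : ¬ blocks I M' b (M.m b) := by
    intro h
    have hdb : M.m b ≠ b := fun e => I.acc_irrefl b (by have h' := h.1; rwa [e] at h')
    have hpba : I.pref b a (M.m b) := hbm.resolve_left hdb
    have h1 := h.2.1
    rw [hM'b] at h1
    rcases h1 with h1 | h1
    · exact hanb h1
    · exact I.pref_irrefl b (M.m b) (I.pref_trans b (M.m b) a (M.m b) h1 hpba)
  -- other blocking pairs of M' containing b block M too
  have hD : ∀ y, y ≠ a → y ≠ M.m b → blocks I M' b y → blocks I M b y := by
    intro y hya hyd h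
    have hyb : y ≠ b := fun e => I.acc_irrefl b (by have h' := h.1; rwa [e] at h')
    refine ⟨h.1, ?_, ?_⟩
    · rcases hbm with h1 | h1
      · exact Or.inl h1
      · refine Or.inr ?_
        have h2 := h.2.1
        rw [hM'b] at h2
        rcases h2 with h2 | h2
        · exact absurd h2 hanb
        · exact I.pref_trans b y a (M.m b) h2 h1
    · have h3 := h.2.2
      rwa [show M'.m y = M.m y from hm'o y hya hyb hyd] at h3
  have hside : ∀ x y, x ≠ a → x ≠ b → x ≠ M.m b →
      ((M'.m x = x ∨ I.pref x y (M'.m x)) ↔ (M.m x = x ∨ I.pref x y (M.m x))) := by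
    intro x y h1 h2 h3
    rw [show M'.m x = M.m x from hm'o x h1 h2 h3]
  set B := {p : Sym2 A | ∃ u v, p = s(u, v) ∧ blocks I M u v} with hBdef
  set B' := {p : Sym2 A | ∃ u v, p = s(u, v) ∧ blocks I M' u v} with hB'def
  set T := {p : Sym2 A | ∃ y, p = s(M.m b, y) ∧ I.acc (M.m b) y ∧ y ≠ b ∧ M.m b ≠ b}
    with hTdef
  have memB : ∀ x y, s(x, y) ∈ B ↔ blocks I M x y := by
    intro x y
    constructor
    · rintro ⟨u, v, huv, hbl⟩
      rcases Sym2.eq_iff.mp huv with ⟨e1, e2⟩ | ⟨e1, e2⟩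
      · rwa [← e1, ← e2] at hbl
      · have hbl' := blocks_symm hbl
        rwa [← e1, ← e2] at hbl'
    · intro h; exact ⟨x, y, rfl, h⟩
  have hnotp : ∀ x y : A, x ≠ a → y ≠ a →
      s(x, y) ∉ ({s(a, b), s(a, c)} : Set (Sym2 A)) := by
    intro x y hx hy he
    simp only [Set.mem_insert_iff, Set.mem_singleton_iff] at he
    rcases he with he | he <;>
      rcases Sym2.eq_iff.mp he with ⟨e1, _⟩ | ⟨_, e2⟩
    · exact hx e1
    · exact hy e2
    · exact hx e1
    · exact hy e2
  have hsub : B' ⊆ (B \ {s(a, b), s(a, c)}) ∪ T := by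
    rintro p ⟨x, y, rfl, hxy⟩
    have hxy' := blocks_symm hxy
    by_cases h1 : x = a
    · rw [h1] at hxy; exact absurd hxy (hA y)
    by_cases h2 : y = a
    · rw [h2] at hxy'; exact absurd hxy' (hA x)
    by_cases h3 : x = b
    · rw [h3] at hxy ⊢
      by_cases h4 : y = M.m b
      · rw [h4] at hxy; exact absurd hxy hbd
      · exact Or.inl ⟨(memB b y).mpr (hD y h2 h4 hxy), hnotp b y (Ne.symm hanb) h2⟩
    by_cases h5 : y = b
    · rw [h5] at hxy' ⊢
      by_cases h6 : x = M.m b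
      · rw [h6] at hxy'; exact absurd hxy' hbd
      · exact Or.inl ⟨(memB x b).mpr (blocks_symm (hD x h1 h6 hxy')),
          hnotp x b h1 (Ne.symm hanb)⟩
    by_cases h7 : x = M.m b
    · rw [h7] at hxy ⊢
      exact Or.inr ⟨y, rfl, hxy.1, h5, fun e => h3 (h7.trans e)⟩
    by_cases h8 : y = M.m b
    · rw [h8] at hxy ⊢
      exact Or.inr ⟨x, Sym2.eq_swap, I.acc_symm _ _ hxy.1, h3, fun e => h5 (h8.trans e)⟩
    · exact Or.inl ⟨(memB x y).mpr ⟨hxy.1, (hside x y h1 h3 h7).mp hxy.2.1,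
        (hside y x h2 h5 h8).mp hxy.2.2⟩, hnotp x y h1 h2⟩
  have hp1 : s(a, b) ∈ B := ⟨a, b, rfl, hb⟩
  have hp2 : s(a, c) ∈ B := ⟨a, c, rfl, hc⟩
  have hp12 : (s(a, b) : Sym2 A) ≠ s(a, c) := by
    intro e
    rcases Sym2.eq_iff.mp e with ⟨_, e2⟩ | ⟨e1, _⟩
    · exact hbc e2
    · exact hanc e1
  have hTcard : T.ncard ≤ 1 := by
    by_cases hdb : M.m b = b
    · have hT0 : T = ∅ := by
        ext p
        simp only [hTdef, Set.mem_setOf_eq, Set.mem_empty_iff_false, iff_false]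
        rintro ⟨y, _, _, _, h4⟩; exact h4 hdb
      simp [hT0]
    · have haccdb : b ∈ {y | I.acc (M.m b) y} :=
        I.acc_symm b (M.m b) (M.acc_matched b hdb)
      have hTsub : T ⊆ (fun y => s(M.m b, y)) '' ({y | I.acc (M.m b) y} \ {b}) := by
        rintro p ⟨y, rfl, h1', h2', _⟩
        exact ⟨y, ⟨h1', h2'⟩, rfl⟩
      calc T.ncard ≤ ((fun y => s(M.m b, y)) '' ({y | I.acc (M.m b) y} \ {b})).ncard :=
            Set.ncard_le_ncard hTsub (Set.toFinite _)
        _ ≤ ({y | I.acc (M.m b) y} \ {b}).ncard := Set.ncard_image_le (Set.toFinite _)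
        _ = {y | I.acc (M.m b) y}.ncard - 1 :=
            Set.ncard_diff_singleton_of_mem haccdb
        _ ≤ 1 := by have := hdeg (M.m b); omega
  have hsub12 : ({s(a, b), s(a, c)} : Set (Sym2 A)) ⊆ B := by
    intro p hp'
    simp only [Set.mem_insert_iff, Set.mem_singleton_iff] at hp'
    rcases hp' with rfl | rfl
    · exact hp1
    · exact hp2
  have hB2 : 2 ≤ B.ncard := by
    have := Set.ncard_le_ncard hsub12 (Set.toFinite _)
    rwa [Set.ncard_pair hp12] at this
  have hdiff : (B \ {s(a, b), s(a, c)}).ncard = B.ncard - 2 := by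
    rw [Set.ncard_diff hsub12 (Set.toFinite _), Set.ncard_pair hp12]
  have hle : B'.ncard ≤ (B \ {s(a, b), s(a, c)}).ncard + T.ncard :=
    (Set.ncard_le_ncard hsub (Set.toFinite _)).trans (Set.ncard_union_le _ _)
  have hmin' : B.ncard ≤ B'.ncard := hmin M'
  omega

/-- If every preference list of an SRI instance has length at most 2, then there
is a matching in which every agent is in at most one blocking pair. -/
theorem stmt8 (A : Type) [Fintype A] (I : SRI A)
    (hdeg : ∀ a, {b | I.acc a b}.ncard ≤ 2) :
    ∃ M : Matching I, ∀ a, bpa I M a ≤ 1 := by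
  classical
  have hne : Nonempty (Matching I) := ⟨⟨id, fun a => rfl, fun a h => absurd rfl h⟩⟩
  obtain ⟨M, hM⟩ := Nat.sInf_mem (Set.range_nonempty (fun M : Matching I => totalBP I M))
  have hM2 : totalBP I M = sInf (Set.range fun M : Matching I => totalBP I M) := hM
  have hmin : ∀ M' : Matching I, totalBP I M ≤ totalBP I M' := fun M' => by
    rw [hM2]; exact Nat.sInf_le ⟨M', rfl⟩
  refine ⟨M, fun a => ?_⟩
  by_contra hlt
  push_neg at hlt
  have hlt' : 1 < {b | blocks I M a b}.ncard := hlt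
  obtain ⟨b, c, hbm, hcm, hbc⟩ := (Set.one_lt_ncard_iff (Set.toFinite _)).mp hlt'
  have hb : blocks I M a b := hbm
  have hc : blocks I M a c := hcm
  rcases I.pref_total a b c hb.1 hc.1 hbc with h | h
  · exact key I M hdeg hmin hb hc hbc h
  · exact key I M hdeg hmin hc hb hbc.symm h
end

section
/- Let M be a maximum-cardinality matching in a graph of maximum degree at most 2, and suppose vertex v is unmatched and has two neighbors u, w. Then both u and w are matched in M; moreover, if u's other neighbor (besides v) exists, that neighbor is also matched in M. -/
/-- A matching in a graph, encoded as an involution: `m v = v` means unmatched. -/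
structure GMatching {V : Type} (G : SimpleGraph V) where
  m : V → V
  invol : ∀ v, m (m v) = v
  adj_matched : ∀ v, m v ≠ v → G.Adj v (m v)

/-- Number of matched vertices. -/
noncomputable def gsize {V : Type} {G : SimpleGraph V} (M : GMatching G) : ℕ :=
  {v | M.m v ≠ v}.ncard

/-- Augmentation: if two adjacent vertices are both unmatched, the matching is not maximum. -/
lemma aug {V : Type} [Fintype V] {G : SimpleGraph V} (M : GMatching G)
    {v u : V} (hv : M.m v = v) (hu : M.m u = u) (hadj : G.Adj v u) :
    ∃ M' : GMatching G, gsize M < gsize M' := by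
  have hvu : v ≠ u := G.ne_of_adj hadj
  have hfixv : ∀ y, M.m y = v → y = v := fun y h => by
    have h2 := M.invol y; rw [h, hv] at h2; exact h2.symm
  have hfixu : ∀ y, M.m y = u → y = u := fun y h => by
    have h2 := M.invol y; rw [h, hu] at h2; exact h2.symm
  classical
  refine ⟨⟨fun y => if y = v then u else if y = u then v else M.m y, ?_, ?_⟩, ?_⟩
  · intro y
    by_cases h1 : y = v
    · simp [h1, hvu.symm, hvu]
    · by_cases h2 : y = u
      · simp [h1, h2, hvu]
      · have h3 : M.m y ≠ v := fun h => h1 (hfixv y h)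
        have h4 : M.m y ≠ u := fun h => h2 (hfixu y h)
        simp [h1, h2, h3, h4, M.invol y]
  · intro y hy
    by_cases h1 : y = v
    · simpa [h1, hvu.symm] using hadj
    · by_cases h2 : y = u
      · subst h2
        simp only [if_neg h1, if_pos rfl]
        exact hadj.symm
      · simp only [if_neg h1, if_neg h2] at hy ⊢
        exact M.adj_matched y hy
  · unfold gsize
    simp only
    have hset : {y | (if y = v then u else if y = u then v else M.m y) ≠ y}
        = insert v (insert u {y | M.m y ≠ y}) := by
      ext y
      by_cases h1 : y = v
      · simp [h1, hvu.symm]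
      · by_cases h2 : y = u
        · simp [h1, h2, hvu, Ne.symm hvu]
        · simp [h1, h2]
    rw [hset]
    have hfin : ({y | M.m y ≠ y} : Set V).Finite := Set.toFinite _
    have hvnot : v ∉ insert u {y | M.m y ≠ y} := by
      simp [hvu, hv]
    have hunot : u ∉ ({y | M.m y ≠ y} : Set V) := by simp [hu]
    rw [Set.ncard_insert_of_notMem hvnot (hfin.insert u),
        Set.ncard_insert_of_notMem hunot hfin]
    omega

/-- In a graph of maximum degree at most 2, if M is a maximum-cardinality
matching and vertex v is unmatched with two (distinct) neighbours u and w, then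
u and w are matched; moreover any other neighbour of u (besides v) is matched. -/
theorem stmt10 (V : Type) [Fintype V] (G : SimpleGraph V)
    (hdeg : ∀ v, {u | G.Adj v u}.ncard ≤ 2)
    (M : GMatching G) (hmax : ∀ M' : GMatching G, gsize M' ≤ gsize M)
    (v u w : V) (hv : M.m v = v)
    (hu : G.Adj v u) (hw : G.Adj v w) (huw : u ≠ w) :
    M.m u ≠ u ∧ M.m w ≠ w ∧ ∀ x, G.Adj u x → x ≠ v → M.m x ≠ x := by
  have hmu : M.m u ≠ u := by
    intro h
    obtain ⟨M', hM'⟩ := aug M hv h hu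
    exact absurd (hmax M') (not_le.mpr hM')
  have hmw : M.m w ≠ w := by
    intro h
    obtain ⟨M', hM'⟩ := aug M hv h hw
    exact absurd (hmax M') (not_le.mpr hM')
  refine ⟨hmu, hmw, ?_⟩
  intro x hux hxv hxx
  -- u's partner p, its neighbours v, x, p are all distinct: contradiction with degree ≤ 2
  set p := M.m u with hp
  have hpadj : G.Adj u p := M.adj_matched u hmu
  have hpv : p ≠ v := by
    intro h
    have := M.invol u
    rw [← hp, h, hv] at this
    exact G.ne_of_adj hu this
  have hpx : p ≠ x := by
    intro h
    have := M.invol u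
    rw [← hp, h, hxx] at this
    exact hmu (by rw [h]; exact this)
  have hsub : ({v, x, p} : Set V) ⊆ {y | G.Adj u y} := by
    intro y hy
    rcases hy with rfl | rfl | rfl
    · exact hu.symm
    · exact hux
    · exact hpadj
  have h3 : ({v, x, p} : Set V).ncard = 3 := by
    rw [Set.ncard_eq_three]
    exact ⟨v, x, p, Ne.symm hxv, Ne.symm hpv, Ne.symm hpx, rfl⟩
  have := Set.ncard_le_ncard hsub (Set.toFinite _)
  rw [h3] at this
  have := hdeg u
  omega
end

section
/- In the 9-agent forcing gadget, if v is removed (matched externally to a preferred partner) and the remaining 8 agents are matched as {f1,f2}, {f3,f4}, {f5,f6}, {f7,f8}, then the blocking pairs among the 8 gadget agents are exactly {f4,f5} and {f6,f8}, so no gadget agent other than possibly v is in more than one blocking pair. -/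
/-- Preference lists of the forcing gadget with v removed (agent i is f_{i+1}). -/
def plist8 : Fin 8 → List (Fin 8) :=
  ![[1, 2, 3, 4, 5, 6, 7],
    [0, 2, 3, 4, 5, 6, 7],
    [3, 4, 5, 6, 7, 0, 1],
    [4, 2, 5, 6, 7, 0, 1],
    [2, 3, 5, 6, 7, 0, 1],
    [6, 7, 0, 1, 2, 3, 4],
    [7, 5, 0, 1, 2, 3, 4],
    [5, 6, 0, 1, 2, 3, 4]]

/-- If, after removing v, the gadget agents are matched as
{f1,f2}, {f3,f4}, {f5,f6}, {f7,f8}, then the blocking pairs are exactly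
{f4,f5} and {f6,f8}, so no gadget agent is in more than one blocking pair. -/
theorem stmt15 (I : SRI (Fin 8))
    (hacc : ∀ a b, I.acc a b ↔ a ≠ b)
    (hpref : ∀ a b c, I.pref a b c ↔
      b ∈ plist8 a ∧ c ∈ plist8 a ∧ (plist8 a).idxOf b < (plist8 a).idxOf c)
    (M : Matching I)
    (h12 : M.m 0 = 1) (h34 : M.m 2 = 3) (h56 : M.m 4 = 5) (h78 : M.m 6 = 7) :
    (∀ a b : Fin 8, blocks I M a b ↔
      ((a = 3 ∧ b = 4) ∨ (a = 4 ∧ b = 3) ∨ (a = 5 ∧ b = 7) ∨ (a = 7 ∧ b = 5))) ∧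
    (∀ a, bpa I M a ≤ 1) := by
  have h21 : M.m 1 = 0 := by rw [← h12, M.invol]
  have h43 : M.m 3 = 2 := by rw [← h34, M.invol]
  have h65 : M.m 5 = 4 := by rw [← h56, M.invol]
  have h87 : M.m 7 = 6 := by rw [← h78, M.invol]
  have hm : ∀ a : Fin 8, M.m a = ![1,0,3,2,5,4,7,6] a := by
    intro a
    fin_cases a
    · exact h12
    · exact h21
    · exact h34
    · exact h43
    · exact h56
    · exact h65
    · exact h78
    · exact h87
  have key : ∀ a b : Fin 8, blocks I M a b ↔
      ((a = 3 ∧ b = 4) ∨ (a = 4 ∧ b = 3) ∨ (a = 5 ∧ b = 7) ∨ (a = 7 ∧ b = 5)) := by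
    intro a b
    have hne : ∀ x : Fin 8, ![1,0,3,2,5,4,7,6] x ≠ x := by decide
    constructor
    · rintro ⟨hab, h1, h2⟩
      rw [hacc] at hab
      rw [hm] at h1 h2
      rcases h1 with h1 | h1
      · exact absurd h1 (hne a)
      rcases h2 with h2 | h2
      · exact absurd h2 (hne b)
      rw [hpref] at h1 h2
      revert hab h1 h2
      revert a b; decide
    · rintro (⟨ha, hb⟩ | ⟨ha, hb⟩ | ⟨ha, hb⟩ | ⟨ha, hb⟩) <;> subst ha <;> subst hb <;>
        refine ⟨(hacc _ _).mpr (by decide), Or.inr ?_, Or.inr ?_⟩ <;>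
        rw [hm, hpref] <;> decide
  refine ⟨key, fun a => ?_⟩
  have hsub : {b | blocks I M a b} ⊆ {![0,0,0,4,3,7,0,5] a} := by
    intro b hb
    rw [Set.mem_setOf_eq, key] at hb
    rcases hb with ⟨ha, hb⟩ | ⟨ha, hb⟩ | ⟨ha, hb⟩ | ⟨ha, hb⟩ <;> subst ha <;> subst hb <;> rfl
  calc bpa I M a ≤ ({![0,0,0,4,3,7,0,5] a} : Set (Fin 8)).ncard :=
        Set.ncard_le_ncard hsub (Set.finite_singleton _)
    _ = 1 := Set.ncard_singleton _
end

section
/- For any fixed ε ∈ (0,1) and all sufficiently large positive integers r, there exists a positive integer k with 0 ≤ k ≤ ⌈max{4/3, (48r)^{q/(1−q)}}⌉ where q = 1 − ε, such that N := 32r + 24r·k satisfies k = ⌊N^{q}⌋, i.e., k^{1/q} ≤ 32r + 24r·k < (k+1)^{1/q}. -/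
/-- Arithmetic existence lemma for the hardness construction: for any fixed
ε ∈ (0,1) and all sufficiently large r, there is k with
0 ≤ k ≤ ⌈max {4/3, (48r)^{q/(1-q)}}⌉ (where q = 1 - ε) such that
N := 32r + 24r·k satisfies k = ⌊N^q⌋, i.e. k^{1/q} ≤ N < (k+1)^{1/q}. -/
theorem stmt19 (ε : ℝ) (hε0 : 0 < ε) (hε1 : ε < 1) :
    ∃ r0 : ℕ, ∀ r : ℕ, r0 ≤ r →
      ∃ k : ℕ,
        k ≤ ⌈max ((4 : ℝ) / 3) ((48 * (r : ℝ)) ^ ((1 - ε) / ε))⌉₊ ∧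
        (let N : ℕ := 32 * r + 24 * r * k
         k = ⌊(N : ℝ) ^ (1 - ε)⌋₊ ∧
         (k : ℝ) ^ (1 / (1 - ε)) ≤ (N : ℝ) ∧
         (N : ℝ) < ((k : ℝ) + 1) ^ (1 / (1 - ε))) := by
  classical
  have hq0 : (0:ℝ) < 1 - ε := by linarith
  refine ⟨1, fun r hr => ?_⟩
  have hr1 : (1:ℝ) ≤ (r:ℝ) := by exact_mod_cast hr
  set P : ℕ → Prop := fun m => (m:ℝ) ^ (1 / (1 - ε)) ≤ 32 * r + 24 * r * m with hP
  -- real bound on members of P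
  have hbound : ∀ m : ℕ, P m →
      (m:ℝ) ≤ max ((4 : ℝ) / 3) ((48 * (r : ℝ)) ^ ((1 - ε) / ε)) := by
    intro m hPm
    rcases le_or_gt m 1 with hm | hm
    · have : (m:ℝ) ≤ 1 := by exact_mod_cast hm
      exact le_trans (by linarith) (le_max_left _ _)
    · have hm2 : (2:ℝ) ≤ (m:ℝ) := by exact_mod_cast hm
      have hm0 : (0:ℝ) < m := by linarith
      have h48 : (m:ℝ) ^ (1 / (1 - ε)) ≤ 48 * r * m := by
        have : 32 * (r:ℝ) + 24 * r * m ≤ 48 * r * m := by nlinarith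
        exact le_trans hPm this
      have hsplit : (m:ℝ) ^ (1 / (1 - ε)) = (m:ℝ) ^ (ε / (1 - ε)) * m := by
        rw [show (1 : ℝ) / (1 - ε) = ε / (1 - ε) + 1 by field_simp; ring,
          Real.rpow_add hm0, Real.rpow_one]
      have hkey : (m:ℝ) ^ (ε / (1 - ε)) ≤ 48 * r := by
        rw [hsplit] at h48
        have := (mul_le_mul_iff_of_pos_right hm0).mp h48
        exact this
      have h1 : ((m:ℝ) ^ (ε / (1 - ε))) ^ ((1 - ε) / ε) ≤
          (48 * (r:ℝ)) ^ ((1 - ε) / ε) :=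
        Real.rpow_le_rpow (by positivity) hkey (by positivity)
      have h2 : ((m:ℝ) ^ (ε / (1 - ε))) ^ ((1 - ε) / ε) = m := by
        rw [← Real.rpow_mul hm0.le,
          show (ε / (1 - ε)) * ((1 - ε) / ε) = 1 by field_simp, Real.rpow_one]
      rw [h2] at h1
      exact le_trans h1 (le_max_right _ _)
  -- nat bound
  have hboundN : ∀ m : ℕ, P m →
      m ≤ ⌈max ((4 : ℝ) / 3) ((48 * (r : ℝ)) ^ ((1 - ε) / ε))⌉₊ := by
    intro m hPm
    calc m = ⌈(m:ℝ)⌉₊ := (Nat.ceil_natCast m).symm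
      _ ≤ _ := Nat.ceil_mono (hbound m hPm)
  set B : ℕ := ⌈max ((4 : ℝ) / 3) ((48 * (r : ℝ)) ^ ((1 - ε) / ε))⌉₊ with hB
  have hP0 : P 0 := by
    simp only [hP, Nat.cast_zero, Real.zero_rpow (one_div_ne_zero hq0.ne')]
    nlinarith
  set k : ℕ := Nat.findGreatest P (B + 1) with hk
  have hPk : P k := Nat.findGreatest_spec (Nat.zero_le _) hP0
  have hkB : k ≤ B := hboundN k hPk
  have hnPk1 : ¬ P (k + 1) :=
    Nat.findGreatest_is_greatest (lt_add_one k) (by omega)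
  refine ⟨k, hkB, ?_⟩
  intro N
  have hNcast : (N:ℝ) = 32 * r + 24 * r * k := by
    simp only [N]; push_cast; ring
  have hlow : (k:ℝ) ^ (1 / (1 - ε)) ≤ (N:ℝ) := by rw [hNcast]; exact hPk
  have hup : (N:ℝ) < ((k:ℝ) + 1) ^ (1 / (1 - ε)) := by
    have h1 : ¬ (((k:ℕ)+1 : ℕ) : ℝ) ^ (1 / (1 - ε)) ≤ 32 * r + 24 * r * ((k:ℕ)+1 : ℕ) := hnPk1
    push_neg at h1
    push_cast at h1
    rw [hNcast]
    nlinarith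
  have hN0 : (0:ℝ) ≤ (N:ℝ) := by positivity
  have hcancel : ∀ x : ℝ, 0 ≤ x → (x ^ (1 / (1 - ε))) ^ (1 - ε) = x := by
    intro x hx
    rw [← Real.rpow_mul hx, one_div_mul_cancel hq0.ne', Real.rpow_one]
  have hfloor : k = ⌊(N : ℝ) ^ (1 - ε)⌋₊ := by
    symm
    rw [Nat.floor_eq_iff (by positivity)]
    constructor
    · have h := Real.rpow_le_rpow (by positivity) hlow hq0.le
      rwa [hcancel (k:ℝ) (Nat.cast_nonneg k)] at h
    · have h := Real.rpow_lt_rpow hN0 hup hq0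
      rwa [hcancel ((k:ℝ)+1) (by positivity)] at h
  exact ⟨hfloor, hlow, hup⟩
end
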